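/- arXiv:1311.4136 — 11 statements merged into one kernel-verified Lean document; each statement's English description precedes it below -/
import Mathlib

section
/- Let d ≥ 1 be an integer and α > 0. The BRC function C : ℝ^d × ℝ → ℝ defined by C(x, e) = exp(−(‖x‖ + |e|)^α), where ‖·‖ is the Euclidean norm on ℝ^d, is a positive definite function on the additive group ℝ^d × ℝ if and only if α ≤ 1. -/
/-- A function `f : E → ℝ` on an additive group `E` is positive definite if for every `n`,
all points `x₁, …, xₙ ∈ E` and all real weights `λ₁, …, λₙ`, one has
`∑ᵢ ∑ⱼ λᵢ λⱼ f (xᵢ - xⱼ) ≥ 0`. -/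
def IsPosDefFun {E : Type*} [AddCommGroup E] (f : E → ℝ) : Prop :=
  ∀ (n : ℕ) (x : Fin n → E) (lam : Fin n → ℝ),
    0 ≤ ∑ i, ∑ j, lam i * lam j * f (x i - x j)

open Real MeasureTheory Set Finset Matrix

def QP {n : ℕ} (K : Fin n → Fin n → ℝ) : Prop :=
  ∀ lam : Fin n → ℝ, 0 ≤ ∑ i, ∑ j, lam i * lam j * K i j

lemma qp_of_factor {n : ℕ} {ι : Type*} [Fintype ι] (C : ι → Fin n → ℝ)
    (K : Fin n → Fin n → ℝ) (hK : ∀ i j, K i j = ∑ k, C k i * C k j) : QP K := by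
  intro lam
  have h1 : ∑ i, ∑ j, lam i * lam j * K i j
      = ∑ i, ∑ j, ∑ k, (lam i * C k i) * (lam j * C k j) := by
    refine Finset.sum_congr rfl fun i _ => Finset.sum_congr rfl fun j _ => ?_
    rw [hK, Finset.mul_sum]
    exact Finset.sum_congr rfl fun k _ => by ring
  have h2 : ∑ i : Fin n, ∑ j : Fin n, ∑ k : ι, (lam i * C k i) * (lam j * C k j)
      = ∑ k : ι, ∑ i : Fin n, ∑ j : Fin n, (lam i * C k i) * (lam j * C k j) := by
    calc ∑ i : Fin n, ∑ j : Fin n, ∑ k : ι, (lam i * C k i) * (lam j * C k j)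
        = ∑ i : Fin n, ∑ k : ι, ∑ j : Fin n, (lam i * C k i) * (lam j * C k j) :=
          Finset.sum_congr rfl fun i _ => Finset.sum_comm
      _ = ∑ k : ι, ∑ i : Fin n, ∑ j : Fin n, (lam i * C k i) * (lam j * C k j) :=
          Finset.sum_comm
  rw [h1, h2]
  refine Finset.sum_nonneg fun k _ => ?_
  have : ∑ i : Fin n, ∑ j : Fin n, (lam i * C k i) * (lam j * C k j)
      = (∑ i : Fin n, lam i * C k i) ^ 2 := by
    rw [sq, Finset.sum_mul_sum]
  rw [this]; exact sq_nonneg _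

open scoped MatrixOrder in
lemma qp_factor {n : ℕ} (K : Fin n → Fin n → ℝ) (hK : QP K)
    (hsymm : ∀ i j, K i j = K j i) :
    ∃ C : Fin n → Fin n → ℝ, ∀ i j, K i j = ∑ k, C k i * C k j := by
  have hpsd : (Matrix.of K).PosSemidef := by
    refine Matrix.PosSemidef.of_dotProduct_mulVec_nonneg ?_ ?_
    · ext i j
      simp only [Matrix.conjTranspose_apply, Matrix.of_apply, star_trivial]
      exact (hsymm i j).symm
    · intro x
      have h := hK x
      have : dotProduct (star x) (Matrix.of K *ᵥ x) = ∑ i, ∑ j, x i * x j * K i j := by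
        simp only [dotProduct, Matrix.mulVec, Pi.star_apply, star_trivial,
          Matrix.of_apply, Finset.mul_sum]
        exact Finset.sum_congr rfl fun i _ => Finset.sum_congr rfl fun j _ => by ring
      rw [this]; exact h
  obtain ⟨B, hB⟩ := CStarAlgebra.nonneg_iff_eq_star_mul_self.mp hpsd.nonneg
  refine ⟨fun k i => B k i, fun i j => ?_⟩
  have h2 : (Matrix.of K) i j = (Bᴴ * B) i j := by rw [hB]; rfl
  simpa [Matrix.mul_apply, Matrix.conjTranspose_apply] using h2

lemma qp_mul {n : ℕ} {K L : Fin n → Fin n → ℝ} (hK : QP K) (hL : QP L)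
    (hKs : ∀ i j, K i j = K j i) (hLs : ∀ i j, L i j = L j i) :
    QP (fun i j => K i j * L i j) := by
  obtain ⟨C, hC⟩ := qp_factor K hK hKs
  obtain ⟨D, hD⟩ := qp_factor L hL hLs
  refine qp_of_factor (ι := Fin n × Fin n) (fun p i => C p.1 i * D p.2 i) _ fun i j => ?_
  rw [hC, hD, Finset.sum_mul_sum, Fintype.sum_prod_type]
  exact Finset.sum_congr rfl fun k _ => Finset.sum_congr rfl fun l _ => by ring

lemma qp_one {n : ℕ} : QP (fun _ _ : Fin n => (1 : ℝ)) := by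
  intro lam
  have : ∑ i, ∑ j, lam i * lam j * 1 = (∑ i, lam i) ^ 2 := by
    rw [sq, Finset.sum_mul_sum]
    exact Finset.sum_congr rfl fun i _ => Finset.sum_congr rfl fun j _ => by ring
  rw [this]; exact sq_nonneg _

lemma qp_pow {n : ℕ} {K : Fin n → Fin n → ℝ} (hK : QP K)
    (hKs : ∀ i j, K i j = K j i) (m : ℕ) : QP (fun i j => K i j ^ m) := by
  induction m with
  | zero => simpa using qp_one
  | succ m ih =>
      have := qp_mul ih hK (fun i j => by rw [hKs]) hKs
      simpa [pow_succ] using this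

lemma qp_exp {n : ℕ} {K : Fin n → Fin n → ℝ} (hK : QP K)
    (hKs : ∀ i j, K i j = K j i) : QP (fun i j => Real.exp (K i j)) := by
  intro lam
  have hsum : ∀ i j : Fin n, Summable (fun m : ℕ => lam i * lam j * (K i j ^ m / (Nat.factorial m : ℝ))) :=
    fun i j => (Real.summable_pow_div_factorial (K i j)).mul_left _
  have hexp : ∀ i j : Fin n, lam i * lam j * Real.exp (K i j)
      = ∑' m : ℕ, lam i * lam j * (K i j ^ m / (Nat.factorial m : ℝ)) := by
    intro i j
    rw [Real.exp_eq_exp_ℝ, NormedSpace.exp_eq_tsum_div, tsum_mul_left]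
  calc (0:ℝ) ≤ ∑' m : ℕ, ∑ i, ∑ j, lam i * lam j * (K i j ^ m / (Nat.factorial m : ℝ)) := by
        refine tsum_nonneg fun m => ?_
        have h1 : ∑ i, ∑ j, lam i * lam j * (K i j ^ m / (Nat.factorial m : ℝ))
            = (1 / (Nat.factorial m : ℝ)) * ∑ i, ∑ j, lam i * lam j * K i j ^ m := by
          rw [Finset.mul_sum]
          refine Finset.sum_congr rfl fun i _ => ?_
          rw [Finset.mul_sum]
          exact Finset.sum_congr rfl fun j _ => by ring
        rw [h1]
        exact mul_nonneg (by positivity) (qp_pow hK hKs m lam)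
    _ = ∑ i, ∑ j, lam i * lam j * Real.exp (K i j) := by
        rw [Summable.tsum_finsetSum (fun i _ => summable_sum (fun j _ => hsum i j))]
        refine Finset.sum_congr rfl fun i _ => ?_
        rw [Summable.tsum_finsetSum (fun j _ => hsum i j)]
        exact Finset.sum_congr rfl fun j _ => (hexp i j).symm

/-- Negative definite (even, vanishing at 0) function on an additive group. -/
def IsNegDef {E : Type*} [AddCommGroup E] (ψ : E → ℝ) : Prop :=
  (∀ x, ψ (-x) = ψ x) ∧ ψ 0 = 0 ∧
  ∀ (n : ℕ) (x : Fin n → E) (lam : Fin n → ℝ), ∑ i, lam i = 0 →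
    ∑ i, ∑ j, lam i * lam j * ψ (x i - x j) ≤ 0


/-- Schoenberg: `exp (-t ψ)` is positive definite when `ψ` is negative definite. -/
lemma schoenberg {E : Type*} [AddCommGroup E] (ψ : E → ℝ) (hψ : IsNegDef ψ)
    {t : ℝ} (ht : 0 ≤ t) : IsPosDefFun (fun x => Real.exp (-(t * ψ x))) := by
  obtain ⟨heven, h0, hnd⟩ := hψ
  intro n x lam
  set K : Fin n → Fin n → ℝ :=
    fun i j => t * (ψ (x i) + ψ (x j) - ψ (x i - x j)) with hKdef
  have hKs : ∀ i j, K i j = K j i := by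
    intro i j
    have h : ψ (x i - x j) = ψ (x j - x i) := by
      rw [← heven (x j - x i), neg_sub]
    simp only [hKdef]; rw [h]; ring
  have hK : QP K := by
    intro mu
    set s : ℝ := ∑ i, mu i with hs
    set p : ℝ := ∑ i, mu i * ψ (x i) with hp
    set Q : ℝ := ∑ i, ∑ j, mu i * mu j * ψ (x i - x j) with hQ
    -- extended system
    have hQle : Q - 2 * s * p ≤ 0 := by
      set x' : Fin (n+1) → E := Fin.cons 0 x with hx'
      set mu' : Fin (n+1) → ℝ := Fin.cons (-s) mu with hmu'
      have hsum0 : ∑ i, mu' i = 0 := by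
        rw [Fin.sum_univ_succ]
        simp only [hmu', Fin.cons_zero, Fin.cons_succ]
        ring
      have hnd' := hnd (n+1) x' mu' hsum0
      have hrow : ∑ j, mu' 0 * mu' j * ψ (x' 0 - x' j) = (-s) * p := by
        rw [Fin.sum_univ_succ]
        simp only [hmu', hx', Fin.cons_zero, Fin.cons_succ, sub_self, h0, mul_zero, zero_sub,
          heven, zero_add]
        rw [hp, Finset.mul_sum]
        exact Finset.sum_congr rfl fun j _ => by ring
      have hrest : ∀ i : Fin n, ∑ j, mu' i.succ * mu' j * ψ (x' i.succ - x' j)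
          = mu i * (-s) * ψ (x i) + ∑ j, mu i * mu j * ψ (x i - x j) := by
        intro i
        rw [Fin.sum_univ_succ]
        simp only [hmu', hx', Fin.cons_zero, Fin.cons_succ, sub_zero]
      have hexp : ∑ i, ∑ j, mu' i * mu' j * ψ (x' i - x' j) = Q - 2 * s * p := by
        rw [Fin.sum_univ_succ, hrow, Finset.sum_congr rfl fun i _ => hrest i,
          Finset.sum_add_distrib]
        have h1 : ∑ i, mu i * (-s) * ψ (x i) = (-s) * p := by
          rw [hp, Finset.mul_sum]
          exact Finset.sum_congr rfl fun i _ => by ring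
        rw [h1, ← hQ]; ring
      rw [hexp] at hnd'
      exact hnd'
    have hA : ∑ i, ∑ j, mu i * mu j * ψ (x i) = p * s := by
      have h1 : ∀ i : Fin n, ∑ j, mu i * mu j * ψ (x i) = (mu i * ψ (x i)) * s := by
        intro i
        rw [hs, Finset.mul_sum]
        exact Finset.sum_congr rfl fun j _ => by ring
      rw [Finset.sum_congr rfl fun i _ => h1 i, ← Finset.sum_mul, ← hp]
    have hB : ∑ i, ∑ j, mu i * mu j * ψ (x j) = s * p := by
      have h1 : ∀ i : Fin n, ∑ j, mu i * mu j * ψ (x j) = mu i * p := by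
        intro i
        rw [hp, Finset.mul_sum]
        exact Finset.sum_congr rfl fun j _ => by ring
      rw [Finset.sum_congr rfl fun i _ => h1 i, ← Finset.sum_mul, ← hs]
    have hsplit : ∑ i, ∑ j, mu i * mu j * K i j
        = t * (∑ i, ∑ j, mu i * mu j * ψ (x i))
          + t * (∑ i, ∑ j, mu i * mu j * ψ (x j))
          - t * Q := by
      rw [hQ]
      simp only [hKdef, Finset.mul_sum, ← Finset.sum_add_distrib, ← Finset.sum_sub_distrib]
      exact Finset.sum_congr rfl fun i _ => Finset.sum_congr rfl fun j _ => by ring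
    rw [hsplit, hA, hB]
    nlinarith [mul_nonneg ht (by linarith : (0:ℝ) ≤ 2 * s * p - Q)]
  -- conclude
  have hq := qp_exp hK hKs (fun i => lam i * Real.exp (-(t * ψ (x i))))
  have heq : ∑ i, ∑ j, (fun i => lam i * Real.exp (-(t * ψ (x i)))) i
        * (fun i => lam i * Real.exp (-(t * ψ (x i)))) j * Real.exp (K i j)
      = ∑ i, ∑ j, lam i * lam j * Real.exp (-(t * ψ (x i - x j))) := by
    refine Finset.sum_congr rfl fun i _ => Finset.sum_congr rfl fun j _ => ?_
    simp only
    rw [mul_mul_mul_comm, ← Real.exp_add, mul_assoc, ← Real.exp_add]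
    congr 2
    simp only [hKdef]; ring
  rw [heq] at hq
  exact hq

lemma isNegDef_normSq {F : Type*} [NormedAddCommGroup F] [InnerProductSpace ℝ F] :
    IsNegDef (fun x : F => ‖x‖ ^ 2) := by
  refine ⟨fun x => by simp, by simp, fun n x lam hlam => ?_⟩
  have hterm : ∀ i j : Fin n, lam i * lam j * ‖x i - x j‖ ^ 2
      = lam i * lam j * ‖x i‖ ^ 2 + lam i * lam j * ‖x j‖ ^ 2
        - 2 * (lam i * lam j * inner ℝ (x i) (x j)) := by
    intro i j
    rw [@norm_sub_sq_real]
    ring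
  have hA : ∑ i, ∑ j, lam i * lam j * ‖x i‖ ^ 2
      = (∑ i, lam i * ‖x i‖ ^ 2) * (∑ i, lam i) := by
    rw [Finset.sum_mul_sum]
    exact Finset.sum_congr rfl fun i _ => Finset.sum_congr rfl fun j _ => by ring
  have hB : ∑ i, ∑ j, lam i * lam j * ‖x j‖ ^ 2
      = (∑ i, lam i) * (∑ i, lam i * ‖x i‖ ^ 2) := by
    rw [Finset.sum_mul_sum]
    exact Finset.sum_congr rfl fun i _ => Finset.sum_congr rfl fun j _ => by ring
  have hC : ∑ i, ∑ j, lam i * lam j * (inner ℝ (x i) (x j) : ℝ)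
      = ‖∑ i, lam i • x i‖ ^ 2 := by
    rw [← real_inner_self_eq_norm_sq, sum_inner]
    refine Finset.sum_congr rfl fun i _ => ?_
    rw [inner_sum]
    refine Finset.sum_congr rfl fun j _ => ?_
    rw [real_inner_smul_left, real_inner_smul_right]
    ring
  have hsplit : ∑ i, ∑ j, lam i * lam j * ‖x i - x j‖ ^ 2
      = (∑ i, ∑ j, lam i * lam j * ‖x i‖ ^ 2)
        + (∑ i, ∑ j, lam i * lam j * ‖x j‖ ^ 2)
        - 2 * ∑ i, ∑ j, lam i * lam j * (inner ℝ (x i) (x j) : ℝ) := by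
    simp only [Finset.sum_congr rfl fun i _ => Finset.sum_congr rfl fun j _ => hterm i j,
      Finset.sum_add_distrib, Finset.sum_sub_distrib, Finset.mul_sum]
  rw [hsplit, hA, hB, hC, hlam]
  have := sq_nonneg ‖∑ i, lam i • x i‖
  nlinarith

lemma IsNegDef.comp {E F : Type*} [AddCommGroup E] [AddCommGroup F] {ψ : F → ℝ}
    (h : IsNegDef ψ) (φ : E →+ F) : IsNegDef (fun x => ψ (φ x)) := by
  obtain ⟨heven, h0, hnd⟩ := h
  refine ⟨fun x => by simp only [map_neg, heven], by simp only [map_zero, h0], fun n x lam hlam => ?_⟩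
  have := hnd n (fun i => φ (x i)) lam hlam
  simpa [map_sub] using this

lemma IsNegDef.add {E : Type*} [AddCommGroup E] {ψ₁ ψ₂ : E → ℝ}
    (h₁ : IsNegDef ψ₁) (h₂ : IsNegDef ψ₂) : IsNegDef (fun x => ψ₁ x + ψ₂ x) := by
  obtain ⟨he₁, h0₁, hnd₁⟩ := h₁
  obtain ⟨he₂, h0₂, hnd₂⟩ := h₂
  refine ⟨fun x => by simp only [he₁, he₂], by simp only [h0₁, h0₂, add_zero], fun n x lam hlam => ?_⟩
  have e : ∑ i, ∑ j, lam i * lam j * (ψ₁ (x i - x j) + ψ₂ (x i - x j))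
      = (∑ i, ∑ j, lam i * lam j * ψ₁ (x i - x j))
        + ∑ i, ∑ j, lam i * lam j * ψ₂ (x i - x j) := by
    simp only [← Finset.sum_add_distrib]
    exact Finset.sum_congr rfl fun i _ => Finset.sum_congr rfl fun j _ => by ring
  have := add_nonpos (hnd₁ n x lam hlam) (hnd₂ n x lam hlam)
  calc ∑ i, ∑ j, lam i * lam j * (fun x => ψ₁ x + ψ₂ x) (x i - x j)
      = _ := e
    _ ≤ 0 := this

section PowerLemma

variable {α : ℝ}

private noncomputable def bint (α : ℝ) : ℝ :=
  ∫ s in Set.Ioi (0:ℝ), (1 - Real.exp (-s)) * s ^ (-1 - α)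

lemma base_contOn (α : ℝ) :
    ContinuousOn (fun s : ℝ => (1 - Real.exp (-s)) * s ^ (-1 - α)) (Set.Ioi 0) := by
  refine ContinuousOn.mul ?_ ?_
  · exact (continuous_const.sub (Real.continuous_exp.comp continuous_neg)).continuousOn
  · exact continuousOn_id.rpow_const fun x hx => Or.inl (ne_of_gt hx)

lemma base_integrable (hα : 0 < α) (hα1 : α < 1) :
    IntegrableOn (fun s : ℝ => (1 - Real.exp (-s)) * s ^ (-1 - α)) (Set.Ioi 0) := by
  have hsplit : Set.Ioc (0:ℝ) 1 ∪ Set.Ioi 1 = Set.Ioi 0 := Set.Ioc_union_Ioi_eq_Ioi zero_le_one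
  rw [← hsplit]
  refine IntegrableOn.union ?_ ?_
  · -- near zero, dominate by s ^ (-α)
    have hg : IntegrableOn (fun s : ℝ => s ^ (-α)) (Set.Ioc (0:ℝ) 1) := by
      have := intervalIntegral.intervalIntegrable_rpow' (a := (0:ℝ)) (b := 1) (r := -α) (by linarith)
      rwa [intervalIntegrable_iff_integrableOn_Ioc_of_le zero_le_one] at this
    refine Integrable.mono' hg ?_ ?_
    · exact ((base_contOn α).mono Set.Ioc_subset_Ioi_self).aestronglyMeasurable measurableSet_Ioc
    · refine (ae_restrict_iff' measurableSet_Ioc).mpr (Filter.Eventually.of_forall ?_)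
      intro s hs
      obtain ⟨hs0, hs1⟩ := hs
      have he : Real.exp (-s) ≤ 1 := Real.exp_le_one_iff.mpr (by linarith)
      have he2 : 1 - s ≤ Real.exp (-s) := by
        have := Real.add_one_le_exp (-s); linarith
      have hrp : (0:ℝ) < s ^ (-1 - α) := Real.rpow_pos_of_pos hs0 _
      rw [Real.norm_eq_abs, abs_mul, abs_of_nonneg (by linarith), abs_of_nonneg hrp.le]
      have : (1 - Real.exp (-s)) * s ^ (-1 - α) ≤ s * s ^ (-1 - α) :=
        mul_le_mul_of_nonneg_right (by linarith) hrp.le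
      calc (1 - Real.exp (-s)) * s ^ (-1 - α) ≤ s * s ^ (-1 - α) := this
        _ = s ^ (-α) := by
            nth_rewrite 1 [← Real.rpow_one s]
            rw [← Real.rpow_add hs0]
            ring_nf
  · -- at infinity, dominate by s ^ (-1 - α)
    have hg : IntegrableOn (fun s : ℝ => s ^ (-1 - α)) (Set.Ioi (1:ℝ)) :=
      integrableOn_Ioi_rpow_of_lt (by linarith) one_pos
    refine Integrable.mono' hg ?_ ?_
    · exact ((base_contOn α).mono (Set.Ioi_subset_Ioi zero_le_one)).aestronglyMeasurable
        measurableSet_Ioi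
    · refine (ae_restrict_iff' measurableSet_Ioi).mpr (Filter.Eventually.of_forall ?_)
      intro s hs
      have hs0 : (0:ℝ) < s := lt_trans one_pos hs
      have he : Real.exp (-s) ≤ 1 := Real.exp_le_one_iff.mpr (by linarith)
      have he3 : 0 < Real.exp (-s) := Real.exp_pos _
      have hrp : (0:ℝ) < s ^ (-1 - α) := Real.rpow_pos_of_pos hs0 _
      rw [Real.norm_eq_abs, abs_mul, abs_of_nonneg (by linarith), abs_of_nonneg hrp.le]
      nlinarith

lemma bint_pos (hα : 0 < α) (hα1 : α < 1) : 0 < bint α := by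
  have hint := base_integrable hα hα1
  have h12 : IntegrableOn (fun s : ℝ => (1 - Real.exp (-s)) * s ^ (-1 - α)) (Set.Ioc 1 2) :=
    hint.mono_set (fun s hs => lt_trans one_pos hs.1)
  have hlow : (1 - Real.exp (-1)) * (2:ℝ) ^ (-1 - α) * (volume (Set.Ioc (1:ℝ) 2)).toReal
      ≤ ∫ s in Set.Ioc (1:ℝ) 2, (1 - Real.exp (-s)) * s ^ (-1 - α) := by
    refine setIntegral_ge_of_const_le_real measurableSet_Ioc (by simp) ?_ h12
    intro s hs
    obtain ⟨hs1, hs2⟩ := hs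
    have hs0 : (0:ℝ) < s := lt_trans one_pos hs1
    have he : Real.exp (-s) ≤ Real.exp (-1) := Real.exp_le_exp.mpr (by linarith)
    have h2 : (2:ℝ) ^ (-1 - α) ≤ s ^ (-1 - α) :=
      Real.rpow_le_rpow_of_nonpos hs0 hs2 (by linarith)
    have hpos1 : (0:ℝ) < 1 - Real.exp (-1) := by
      have : Real.exp (-1) < 1 := Real.exp_lt_one_iff.mpr (by norm_num)
      linarith
    refine mul_le_mul (by linarith) h2 (by positivity) (by linarith)
  have hmono : ∫ s in Set.Ioc (1:ℝ) 2, (1 - Real.exp (-s)) * s ^ (-1 - α)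
      ≤ bint α := by
    refine setIntegral_mono_set hint ?_ ?_
    · refine (ae_restrict_iff' measurableSet_Ioi).mpr (Filter.Eventually.of_forall ?_)
      intro s hs
      simp only [Pi.zero_apply]
      have he : Real.exp (-s) ≤ 1 := Real.exp_le_one_iff.mpr (by linarith [Set.mem_Ioi.mp hs])
      have hs0 : (0:ℝ) < s := mem_Ioi.mp hs
      have := Real.rpow_pos_of_pos hs0 (-1-α)
      nlinarith
    · exact HasSubset.Subset.eventuallyLE (fun s hs => lt_trans one_pos hs.1)
  have hvol : (volume (Set.Ioc (1:ℝ) 2)).toReal = 1 := by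
    rw [Real.volume_Ioc]; norm_num
  rw [hvol, mul_one] at hlow
  have hpos1 : (0:ℝ) < 1 - Real.exp (-1) := by
    have : Real.exp (-1) < 1 := Real.exp_lt_one_iff.mpr (by norm_num)
    linarith
  have : (0:ℝ) < (1 - Real.exp (-1)) * (2:ℝ) ^ (-1 - α) := by positivity
  linarith

lemma scaled_pointwise (hα : 0 < α) {t : ℝ} (ht : 0 < t) {s : ℝ} (hs : s ∈ Set.Ioi (0:ℝ)) :
    (1 - Real.exp (-(t * s))) * s ^ (-1 - α)
      = t ^ (1 + α) * ((1 - Real.exp (-(t * s))) * (t * s) ^ (-1 - α)) := by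
  have hs0 : (0:ℝ) < s := hs
  rw [Real.mul_rpow ht.le hs0.le]
  have h1 : t ^ (1 + α) * t ^ (-1 - α) = 1 := by
    rw [← Real.rpow_add ht]
    norm_num
  calc (1 - Real.exp (-(t * s))) * s ^ (-1 - α)
      = (t ^ (1 + α) * t ^ (-1 - α)) * ((1 - Real.exp (-(t * s))) * s ^ (-1 - α)) := by
        rw [h1, one_mul]
    _ = t ^ (1 + α) * ((1 - Real.exp (-(t * s))) * (t ^ (-1 - α) * s ^ (-1 - α))) := by ring

lemma scaled_eq (hα : 0 < α) (hα1 : α < 1) {t : ℝ} (ht : 0 ≤ t) :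
    ∫ s in Set.Ioi (0:ℝ), (1 - Real.exp (-(t * s))) * s ^ (-1 - α)
      = t ^ α * bint α := by
  rcases eq_or_lt_of_le ht with h | h
  · simp only [← h, zero_mul, neg_zero, Real.exp_zero, sub_self]
    rw [Real.zero_rpow (ne_of_gt hα)]
    simp
  · have hcongr : ∫ s in Set.Ioi (0:ℝ), (1 - Real.exp (-(t * s))) * s ^ (-1 - α)
        = ∫ s in Set.Ioi (0:ℝ),
            t ^ (1 + α) * ((1 - Real.exp (-(t * s))) * (t * s) ^ (-1 - α)) :=
      setIntegral_congr_fun measurableSet_Ioi fun s hs => scaled_pointwise hα h hs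
    rw [hcongr, integral_const_mul]
    have hcv := integral_comp_mul_left_Ioi
      (fun u => (1 - Real.exp (-u)) * u ^ (-1 - α)) 0 h
    simp only [mul_zero] at hcv
    rw [hcv]
    simp only [smul_eq_mul, bint]
    rw [← mul_assoc, ← Real.rpow_neg_one t, ← Real.rpow_add h]
    norm_num

lemma scaled_integrable (hα : 0 < α) (hα1 : α < 1) {t : ℝ} (ht : 0 ≤ t) :
    IntegrableOn (fun s : ℝ => (1 - Real.exp (-(t * s))) * s ^ (-1 - α))
      (Set.Ioi 0) := by
  rcases eq_or_lt_of_le ht with h | h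
  · simp only [← h, zero_mul, neg_zero, Real.exp_zero, sub_self, zero_mul]
    exact integrableOn_zero
  · have hbase := base_integrable hα hα1
    have hcomp : IntegrableOn
        (fun s : ℝ => (1 - Real.exp (-(t * s))) * (t * s) ^ (-1 - α)) (Set.Ioi 0) := by
      have := (integrableOn_Ioi_comp_mul_left_iff
        (fun u => (1 - Real.exp (-u)) * u ^ (-1 - α)) 0 h).mpr
      simp only [mul_zero] at this
      exact this hbase
    have h2 := hcomp.const_mul (t ^ (1 + α))
    exact IntegrableOn.congr_fun h2 (fun s hs => (scaled_pointwise hα h hs).symm)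
      measurableSet_Ioi

/-- The fractional power of a nonnegative negative definite function is negative definite. -/
lemma IsNegDef.rpow {E : Type*} [AddCommGroup E] {ψ : E → ℝ} (h : IsNegDef ψ)
    (hnn : ∀ x, 0 ≤ ψ x) (hα : 0 < α) (hα1 : α < 1) :
    IsNegDef (fun x => ψ x ^ α) := by
  obtain ⟨heven, h0, hnd⟩ := h
  refine ⟨fun x => by simp only [heven], by simp only [h0, Real.zero_rpow (ne_of_gt hα)],
    fun n x lam hlam => ?_⟩
  have hI := bint_pos hα hα1
  set F : Fin n → Fin n → ℝ → ℝ := fun i j s =>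
    lam i * lam j * ((1 - Real.exp (-(ψ (x i - x j) * s))) * s ^ (-1 - α)) with hF
  have hFint : ∀ i j, IntegrableOn (F i j) (Set.Ioi 0) :=
    fun i j => (scaled_integrable hα hα1 (hnn (x i - x j))).const_mul _
  have hkey : (∑ i, ∑ j, lam i * lam j * ψ (x i - x j) ^ α) * bint α
      = ∫ s in Set.Ioi (0:ℝ), ∑ i, ∑ j, F i j s := by
    rw [integral_finset_sum _ (fun i _ => integrable_finset_sum _ (fun j _ => hFint i j)),
      Finset.sum_mul]
    refine Finset.sum_congr rfl fun i _ => ?_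
    rw [integral_finset_sum _ (fun j _ => hFint i j), Finset.sum_mul]
    refine Finset.sum_congr rfl fun j _ => ?_
    rw [hF]
    simp only
    rw [integral_const_mul, scaled_eq hα hα1 (hnn (x i - x j))]
    ring
  have hneg : ∫ s in Set.Ioi (0:ℝ), ∑ i, ∑ j, F i j s ≤ 0 := by
    have hae : ∀ᵐ s ∂(volume.restrict (Set.Ioi (0:ℝ))),
        (∑ i, ∑ j, F i j s) ≤ 0 := by
      refine (ae_restrict_iff' measurableSet_Ioi).mpr (Filter.Eventually.of_forall ?_)
      intro s hs
      have hs0 : (0:ℝ) < s := hs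
      have hpd := schoenberg ψ ⟨heven, h0, hnd⟩ hs0.le n x lam
      simp only at hpd
      have hrw : ∑ i, ∑ j, F i j s
          = (∑ i, ∑ j, lam i * lam j) * s ^ (-1 - α)
            - (∑ i, ∑ j, lam i * lam j * Real.exp (-(s * ψ (x i - x j)))) * s ^ (-1 - α) := by
        rw [← sub_mul, ← Finset.sum_sub_distrib, Finset.sum_mul]
        refine Finset.sum_congr rfl fun i _ => ?_
        rw [← Finset.sum_sub_distrib, Finset.sum_mul]
        refine Finset.sum_congr rfl fun j _ => ?_
        rw [hF]
        simp only
        rw [mul_comm (ψ (x i - x j)) s]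
        ring
      have hzero : ∑ i, ∑ j, lam i * lam j = 0 := by
        have : ∑ i, ∑ j, lam i * lam j = (∑ i, lam i) * (∑ j, lam j) := by
          rw [Finset.sum_mul_sum]
        rw [this, hlam, zero_mul]
      rw [hrw, hzero, zero_mul, zero_sub, neg_nonpos]
      exact mul_nonneg hpd (Real.rpow_pos_of_pos hs0 _).le
    exact integral_nonpos_of_ae hae
  nlinarith [hkey, hneg, hI]

end PowerLemma

lemma isNegDef_norm_fst (d : ℕ) :
    IsNegDef (fun p : EuclideanSpace ℝ (Fin d) × ℝ => ‖p.1‖) := by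
  have hsq : IsNegDef (fun p : EuclideanSpace ℝ (Fin d) × ℝ => ‖p.1‖ ^ 2) :=
    isNegDef_normSq.comp (AddMonoidHom.fst (EuclideanSpace ℝ (Fin d)) ℝ)
  have hr := hsq.rpow (fun p => by positivity) (by norm_num : (0:ℝ) < 2⁻¹)
    (by norm_num : (2:ℝ)⁻¹ < 1)
  have heq : (fun p : EuclideanSpace ℝ (Fin d) × ℝ => (‖p.1‖ ^ 2 : ℝ) ^ ((2:ℝ)⁻¹))
      = fun p : EuclideanSpace ℝ (Fin d) × ℝ => ‖p.1‖ := by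
    funext p
    rw [show ((2:ℝ)⁻¹) = (((2:ℕ) : ℝ))⁻¹ by norm_num,
      Real.pow_rpow_inv_natCast (norm_nonneg _) two_ne_zero]
  rwa [heq] at hr

lemma isNegDef_abs_snd (d : ℕ) :
    IsNegDef (fun p : EuclideanSpace ℝ (Fin d) × ℝ => |p.2|) := by
  have hsq : IsNegDef (fun p : EuclideanSpace ℝ (Fin d) × ℝ => ‖p.2‖ ^ 2) :=
    isNegDef_normSq.comp (AddMonoidHom.snd (EuclideanSpace ℝ (Fin d)) ℝ)
  have hr := hsq.rpow (fun p => by positivity) (by norm_num : (0:ℝ) < 2⁻¹)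
    (by norm_num : (2:ℝ)⁻¹ < 1)
  have heq : (fun p : EuclideanSpace ℝ (Fin d) × ℝ => (‖p.2‖ ^ 2 : ℝ) ^ ((2:ℝ)⁻¹))
      = fun p : EuclideanSpace ℝ (Fin d) × ℝ => |p.2| := by
    funext p
    rw [show ((2:ℝ)⁻¹) = (((2:ℕ) : ℝ))⁻¹ by norm_num,
      Real.pow_rpow_inv_natCast (norm_nonneg _) two_ne_zero, Real.norm_eq_abs]
  rwa [heq] at hr

lemma brc_forward (d : ℕ) {α : ℝ} (hα : 0 < α) (hα1 : α ≤ 1) :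
    IsPosDefFun (fun p : EuclideanSpace ℝ (Fin d) × ℝ =>
      Real.exp (-(‖p.1‖ + |p.2|) ^ α)) := by
  have hsum : IsNegDef (fun p : EuclideanSpace ℝ (Fin d) × ℝ => ‖p.1‖ + |p.2|) :=
    (isNegDef_norm_fst d).add (isNegDef_abs_snd d)
  rcases eq_or_lt_of_le hα1 with h1 | h1
  · have := schoenberg _ hsum (zero_le_one (α := ℝ))
    intro n x lam
    have h2 := this n x lam
    simp only [one_mul] at h2
    simp only [h1, Real.rpow_one]
    exact h2
  · have hψα : IsNegDef (fun p : EuclideanSpace ℝ (Fin d) × ℝ => (‖p.1‖ + |p.2|) ^ α) :=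
      hsum.rpow (fun p => by positivity) hα h1
    have := schoenberg _ hψα (zero_le_one (α := ℝ))
    intro n x lam
    have h2 := this n x lam
    simp only [one_mul] at h2
    exact h2

lemma exists_gap {β : ℝ} (hβ : 2 < β) :
    ∃ t : ℝ, 0 < t ∧ 1 + Real.exp (-(β * t)) < 2 * Real.exp (-t) := by
  set ε : ℝ := (β - 2) / (2 * β ^ 2) with hε
  have hβ0 : 0 < β := by linarith
  have hεpos : 0 < ε := by rw [hε]; exact div_pos (by linarith) (by positivity)
  set g : ℝ → ℝ := fun t => 2 * Real.exp (-t) - Real.exp (-(β * t)) with hg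
  have hderiv : ∀ t : ℝ, HasDerivAt g (-2 * Real.exp (-t) + β * Real.exp (-(β * t))) t := by
    intro t
    have h1 : HasDerivAt (fun t : ℝ => Real.exp (-t)) (-Real.exp (-t)) t := by
      simpa [Function.comp_def] using (Real.hasDerivAt_exp (-t)).comp t (hasDerivAt_neg t)
    have h2 : HasDerivAt (fun t : ℝ => Real.exp (-(β * t))) (-β * Real.exp (-(β * t))) t := by
      have hin : HasDerivAt (fun t : ℝ => -(β * t)) (-β) t := by
        simpa [Pi.neg_def] using ((hasDerivAt_id t).const_mul β).neg
      simpa [mul_comm, Function.comp_def] using (Real.hasDerivAt_exp (-(β * t))).comp t hin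
    have := (h1.const_mul 2).sub h2
    convert this using 1
    · rfl
    · rfl
    · rfl
    · ring
  have hmono : StrictMonoOn g (Set.Icc 0 ε) := by
    refine strictMonoOn_of_deriv_pos (convex_Icc 0 ε) ?_ ?_
    · exact ((continuous_const.mul (Real.continuous_exp.comp continuous_neg)).sub
        (Real.continuous_exp.comp (continuous_const.mul continuous_id).neg)).continuousOn
    · intro t ht
      rw [interior_Icc] at ht
      obtain ⟨ht0, htε⟩ := ht
      rw [(hderiv t).deriv]
      have he1 : Real.exp (-t) ≤ 1 := Real.exp_le_one_iff.mpr (by linarith)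
      have he2 : 1 - β * t ≤ Real.exp (-(β * t)) := by
        have := Real.add_one_le_exp (-(β * t)); linarith
      have hb2 : β * (1 - β * t) ≥ β - β ^ 2 * ε := by nlinarith
      have : β - β ^ 2 * ε = (β + 2) / 2 := by
        rw [hε]; field_simp; ring
      nlinarith [Real.exp_pos (-(β * t))]
  have h0mem : (0:ℝ) ∈ Set.Icc 0 ε := Set.left_mem_Icc.mpr hεpos.le
  have hεmem : ε ∈ Set.Icc 0 ε := Set.right_mem_Icc.mpr hεpos.le
  have := hmono h0mem hεmem hεpos
  rw [hg] at this
  simp only [neg_zero, mul_zero, Real.exp_zero] at this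
  exact ⟨ε, hεpos, by linarith⟩

lemma brc_reverse (d : ℕ) (hd : 1 ≤ d) {α : ℝ} (hα : 0 < α)
    (hpd : IsPosDefFun (fun p : EuclideanSpace ℝ (Fin d) × ℝ =>
      Real.exp (-(‖p.1‖ + |p.2|) ^ α))) : α ≤ 1 := by
  by_contra hgt
  push_neg at hgt
  set β : ℝ := (2:ℝ) ^ α with hβdef
  have hβ : 2 < β := by
    calc (2:ℝ) = 2 ^ (1:ℝ) := (Real.rpow_one 2).symm
      _ < 2 ^ α := Real.rpow_lt_rpow_of_exponent_lt one_lt_two hgt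
  obtain ⟨t, ht, hineq⟩ := exists_gap hβ
  set u : ℝ := t ^ (α⁻¹) with hu_def
  have hu : 0 < u := Real.rpow_pos_of_pos ht _
  have hu1 : u ^ α = t := Real.rpow_inv_rpow ht.le (ne_of_gt hα)
  have h2u : (u + u) ^ α = β * t := by
    have : u + u = 2 * u := by ring
    rw [this, Real.mul_rpow (by norm_num) hu.le, hu1]
  set a : EuclideanSpace ℝ (Fin d) := EuclideanSpace.single (⟨0, hd⟩ : Fin d) u with ha
  have hna : ‖a‖ = u := by
    rw [ha, EuclideanSpace.norm_single, Real.norm_eq_abs, abs_of_pos hu]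
  set x : Fin 4 → EuclideanSpace ℝ (Fin d) × ℝ := ![(0, 0), (a, 0), (0, u), (a, u)] with hx
  set lam : Fin 4 → ℝ := ![1, -1, -1, 1] with hlam
  have h := hpd 4 x lam
  have habs : |u| = u := abs_of_pos hu
  have h00 : ((0:ℝ) + 0) ^ α = 0 := by
    rw [add_zero, Real.zero_rpow (ne_of_gt hα)]
  have h0u : ((0:ℝ) + u) ^ α = t := by rw [zero_add, hu1]
  have hu0 : (u + (0:ℝ)) ^ α = t := by rw [add_zero, hu1]
  simp only [hx, hlam, Fin.sum_univ_four, Matrix.cons_val_zero, Matrix.cons_val_one,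
    Matrix.head_cons, Matrix.cons_val_two, Matrix.tail_cons, Matrix.cons_val_three,
    Prod.mk_sub_mk, sub_zero, zero_sub, sub_self, Prod.fst_zero, Prod.snd_zero, norm_zero, norm_neg, hna, abs_zero,
    abs_neg, habs, h00, h0u, hu0, h2u, neg_zero, Real.exp_zero] at h
  nlinarith [h, hineq, Real.exp_pos (-t), Real.exp_pos (-(β * t))]

/-- The BRC function `C(x, e) = exp(−(‖x‖ + |e|)^α)` on `ℝ^d × ℝ` (with the Euclidean norm
on `ℝ^d`) is positive definite if and only if `α ≤ 1`. -/
theorem brc_posDef_iff (d : ℕ) (hd : 1 ≤ d) (α : ℝ) (hα : 0 < α) :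
    IsPosDefFun (fun p : EuclideanSpace ℝ (Fin d) × ℝ =>
      Real.exp (-(‖p.1‖ + |p.2|) ^ α)) ↔ α ≤ 1 :=
  ⟨fun h => brc_reverse d hd hα h, fun h => brc_forward d hα h⟩
end

section
/- For α > 0, the function γ : ℝ × ℝ → ℝ defined by γ(s, t) = (|s| + |t|)^α is conditionally negative definite (a variogram) on ℝ² if and only if α ≤ 1. -/
open MeasureTheory Set Real

namespace SumAbsPowVariogram

/-! ### Positive semidefiniteness of min kernels via integral representations -/

lemma ind_prod_eq (a b : ℝ) (c : ℝ) :
    (fun t : ℝ => c * ((Ioo (0:ℝ) a).indicator (fun _ => (1:ℝ)) t *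
        (Ioo (0:ℝ) b).indicator (fun _ => (1:ℝ)) t))
      = fun t => (Ioo (0:ℝ) (min a b)).indicator (fun _ => c) t := by
  funext t
  simp only [Set.indicator, mem_Ioo, lt_min_iff, mul_ite, ite_mul, mul_one,
    mul_zero, zero_mul]
  split_ifs <;> first | rfl | (exfalso; tauto)

lemma ind_prod_integrable (a b : ℝ) (c : ℝ) :
    Integrable (fun t : ℝ => c * ((Ioo (0:ℝ) a).indicator (fun _ => (1:ℝ)) t *
        (Ioo (0:ℝ) b).indicator (fun _ => (1:ℝ)) t)) := by
  rw [ind_prod_eq]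
  rw [integrable_indicator_iff measurableSet_Ioo]
  exact integrableOn_const (by simp [Real.volume_Ioo])

lemma ind_prod_integral (a b : ℝ) (ha : 0 ≤ a) (hb : 0 ≤ b) (c : ℝ) :
    (∫ t : ℝ, c * ((Ioo (0:ℝ) a).indicator (fun _ => (1:ℝ)) t *
        (Ioo (0:ℝ) b).indicator (fun _ => (1:ℝ)) t)) = c * min a b := by
  rw [ind_prod_eq, integral_indicator_const _ measurableSet_Ioo, measureReal_def, Real.volume_Ioo,
    smul_eq_mul, mul_comm]
  congr 1
  rw [ENNReal.toReal_ofReal (by simp [le_min_iff, ha, hb])]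
  simp

variable {n : ℕ}

lemma min_kernel_nonneg (z : Fin n → ℝ) (hz : ∀ i, 0 ≤ z i) (g : Fin n → ℝ) :
    0 ≤ ∑ i, ∑ j, g i * g j * min (z i) (z j) := by
  set f : Fin n → ℝ → ℝ := fun i => (Ioo (0:ℝ) (z i)).indicator (fun _ => (1:ℝ)) with hf
  have key : (∫ t, (∑ i, g i * f i t)^2) = ∑ i, ∑ j, g i * g j * min (z i) (z j) := by
    have hpt : ∀ t : ℝ, (∑ i, g i * f i t)^2
        = ∑ i, ∑ j, g i * g j * (f i t * f j t) := by
      intro t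
      rw [sq, Finset.sum_mul_sum]
      exact Finset.sum_congr rfl fun i _ => Finset.sum_congr rfl fun j _ => by ring
    simp_rw [hpt]
    rw [integral_finset_sum _ (fun i _ => integrable_finset_sum _
      (fun j _ => ind_prod_integrable (z i) (z j) _))]
    refine Finset.sum_congr rfl fun i _ => ?_
    rw [integral_finset_sum _ (fun j _ => ind_prod_integrable (z i) (z j) _)]
    exact Finset.sum_congr rfl fun j _ => ind_prod_integral _ _ (hz i) (hz j) _
  rw [← key]
  exact integral_nonneg fun t => sq_nonneg _

lemma min_min_kernel_nonneg (z w : Fin n → ℝ) (hz : ∀ i, 0 ≤ z i)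
    (hw : ∀ i, 0 ≤ w i) (g : Fin n → ℝ) :
    0 ≤ ∑ i, ∑ j, g i * g j * (min (z i) (z j) * min (w i) (w j)) := by
  set f : Fin n → ℝ → ℝ := fun i => (Ioo (0:ℝ) (z i)).indicator (fun _ => (1:ℝ)) with hf
  have key : (∫ t, ∑ i, ∑ j, (g i * f i t) * (g j * f j t) * min (w i) (w j))
      = ∑ i, ∑ j, g i * g j * (min (z i) (z j) * min (w i) (w j)) := by
    have hre : ∀ (i j : Fin n) (t : ℝ), (g i * f i t) * (g j * f j t) * min (w i) (w j)
        = (g i * g j * min (w i) (w j)) * (f i t * f j t) := fun i j t => by ring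
    simp_rw [hre]
    rw [integral_finset_sum _ (fun i _ => integrable_finset_sum _
      (fun j _ => ind_prod_integrable (z i) (z j) _))]
    refine Finset.sum_congr rfl fun i _ => ?_
    rw [integral_finset_sum _ (fun j _ => ind_prod_integrable (z i) (z j) _)]
    refine Finset.sum_congr rfl fun j _ => ?_
    rw [ind_prod_integral _ _ (hz i) (hz j)]
    ring
  rw [← key]
  refine integral_nonneg fun t => ?_
  exact min_kernel_nonneg w hw (fun i => g i * f i t)

/-! ### Exponential kernels -/

lemma exp_neg_abs_eq (a b : ℝ) :
    Real.exp (-|a - b|)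
      = (Real.exp (-a) * Real.exp (-b)) * min (Real.exp (2*a)) (Real.exp (2*b)) := by
  rcases le_total a b with h | h
  · rw [abs_of_nonpos (by linarith), min_eq_left (Real.exp_le_exp.2 (by linarith)),
      ← Real.exp_add, ← Real.exp_add]
    ring_nf
  · rw [abs_of_nonneg (by linarith), min_eq_right (Real.exp_le_exp.2 (by linarith)),
      ← Real.exp_add, ← Real.exp_add]
    ring_nf

lemma exp_exp_kernel_nonneg (s t : Fin n → ℝ) (g : Fin n → ℝ) :
    0 ≤ ∑ i, ∑ j, g i * g j * (Real.exp (-|s i - s j|) * Real.exp (-|t i - t j|)) := by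
  have h := min_min_kernel_nonneg (fun i => Real.exp (2 * s i)) (fun i => Real.exp (2 * t i))
    (fun i => (Real.exp_pos _).le) (fun i => (Real.exp_pos _).le)
    (fun i => g i * (Real.exp (- s i) * Real.exp (- t i)))
  refine h.trans_eq (Finset.sum_congr rfl fun i _ => Finset.sum_congr rfl fun j _ => ?_)
  rw [exp_neg_abs_eq (s i) (s j), exp_neg_abs_eq (t i) (t j)]
  ring

lemma exp_dist_kernel_nonneg (u : ℝ) (hu : 0 ≤ u) (s t : Fin n → ℝ) (g : Fin n → ℝ) :
    0 ≤ ∑ i, ∑ j, g i * g j * Real.exp (-(u * (|s i - s j| + |t i - t j|))) := by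
  have h := exp_exp_kernel_nonneg (fun i => u * s i) (fun i => u * t i) g
  refine h.trans_eq (Finset.sum_congr rfl fun i _ => Finset.sum_congr rfl fun j _ => ?_)
  rw [← Real.exp_add, ← mul_sub, ← mul_sub, abs_mul, abs_mul, abs_of_nonneg hu]
  ring_nf

/-! ### The subordination integral -/

noncomputable def J (α x : ℝ) : ℝ := ∫ u in Ioi (0:ℝ), (1 - Real.exp (-(u*x))) * u ^ (-α-1)

variable {α : ℝ}

lemma integrand_contOn (x : ℝ) :
    ContinuousOn (fun u : ℝ => (1 - Real.exp (-(u*x))) * u ^ (-α-1)) (Ioi 0) := by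
  refine ContinuousOn.mul ?_ ?_
  · exact (continuous_const.sub ((continuous_id.mul continuous_const).neg.rexp)).continuousOn
  · exact ContinuousOn.rpow_const continuousOn_id
      (fun u hu => Or.inl (ne_of_gt (mem_Ioi.1 hu)))

lemma integrand_integrable (hα : 0 < α) (hα1 : α < 1) {x : ℝ} (hx : 0 ≤ x) :
    IntegrableOn (fun u : ℝ => (1 - Real.exp (-(u*x))) * u ^ (-α-1)) (Ioi 0) := by
  have hmeas : ∀ (s : Set ℝ), s ⊆ Ioi 0 → MeasurableSet s →
      AEStronglyMeasurable (fun u : ℝ => (1 - Real.exp (-(u*x))) * u ^ (-α-1))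
        (volume.restrict s) := fun s hs hsm =>
    ((integrand_contOn x).mono hs).aestronglyMeasurable hsm
  have h1 : IntegrableOn (fun u : ℝ => (1 - Real.exp (-(u*x))) * u ^ (-α-1)) (Ioc 0 1) := by
    have hg : IntegrableOn (fun u : ℝ => x * u ^ (-α)) (Ioc 0 1) := by
      have := intervalIntegral.intervalIntegrable_rpow' (a := 0) (b := 1)
        (r := -α) (by linarith)
      rw [intervalIntegrable_iff_integrableOn_Ioc_of_le zero_le_one] at this
      exact this.const_mul x
    refine Integrable.mono hg (hmeas _ (fun u hu => hu.1) measurableSet_Ioc) ?_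
    refine (ae_restrict_iff' measurableSet_Ioc).2 (Filter.Eventually.of_forall ?_)
    intro u hu
    have hu0 : 0 < u := hu.1
    have hux : 0 ≤ u * x := mul_nonneg hu0.le hx
    have h1e : 0 ≤ 1 - Real.exp (-(u*x)) := by
      simpa using Real.exp_le_one_iff.2 (by linarith : -(u*x) ≤ 0)
    have h2e : 1 - Real.exp (-(u*x)) ≤ u * x := by
      nlinarith [Real.add_one_le_exp (-(u*x))]
    have hpow : (0:ℝ) ≤ u ^ (-α-1) := Real.rpow_nonneg hu0.le _
    rw [Real.norm_eq_abs, Real.norm_eq_abs, abs_of_nonneg (mul_nonneg h1e hpow),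
      abs_of_nonneg (by positivity)]
    calc (1 - Real.exp (-(u*x))) * u ^ (-α-1) ≤ (u * x) * u ^ (-α-1) :=
          mul_le_mul_of_nonneg_right h2e hpow
      _ = x * (u * u ^ (-α-1)) := by ring
      _ = x * u ^ (-α) := by
          congr 1
          rw [show u * u ^ (-α-1) = u ^ (1:ℝ) * u ^ (-α-1) by rw [Real.rpow_one],
            ← Real.rpow_add hu0]
          norm_num
  have h2 : IntegrableOn (fun u : ℝ => (1 - Real.exp (-(u*x))) * u ^ (-α-1)) (Ioi 1) := by
    have hg : IntegrableOn (fun u : ℝ => u ^ (-α-1)) (Ioi 1) :=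
      integrableOn_Ioi_rpow_of_lt (by linarith) one_pos
    refine Integrable.mono hg (hmeas _ (fun u hu => mem_Ioi.2 (lt_trans one_pos hu)) measurableSet_Ioi) ?_
    refine (ae_restrict_iff' measurableSet_Ioi).2 (Filter.Eventually.of_forall ?_)
    intro u hu
    have hu0 : 0 < u := lt_trans one_pos hu
    have hux : 0 ≤ u * x := mul_nonneg hu0.le hx
    have h1e : 0 ≤ 1 - Real.exp (-(u*x)) := by
      simpa using Real.exp_le_one_iff.2 (by linarith : -(u*x) ≤ 0)
    have h2e : 1 - Real.exp (-(u*x)) ≤ 1 := by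
      have := Real.exp_pos (-(u*x)); linarith
    have hpow : (0:ℝ) ≤ u ^ (-α-1) := Real.rpow_nonneg hu0.le _
    rw [Real.norm_eq_abs, Real.norm_eq_abs, abs_of_nonneg (mul_nonneg h1e hpow),
      abs_of_nonneg hpow]
    nlinarith
  have := h1.union h2
  rwa [Ioc_union_Ioi_eq_Ioi zero_le_one] at this

lemma J_zero : J α 0 = 0 := by
  unfold J
  simp

lemma J_scale {x : ℝ} (hx : 0 < x) : J α x = x ^ α * J α 1 := by
  unfold J
  have key : ∀ u ∈ Ioi (0:ℝ), (1 - Real.exp (-(u*x))) * u ^ (-α-1)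
      = x ^ (α+1) * ((1 - Real.exp (-(x*u*1))) * (x*u) ^ (-α-1)) := by
    intro u hu
    have hu0 : 0 < u := mem_Ioi.1 hu
    rw [Real.mul_rpow hx.le hu0.le, mul_one, mul_comm x u]
    rw [show x ^ (α+1) * ((1 - Real.exp (-(u*x))) * (x ^ (-α-1) * u ^ (-α-1)))
        = (x ^ (α+1) * x ^ (-α-1)) * ((1 - Real.exp (-(u*x))) * u ^ (-α-1)) by ring,
      ← Real.rpow_add hx]
    norm_num
  rw [setIntegral_congr_fun measurableSet_Ioi key, integral_const_mul,
    integral_comp_mul_left_Ioi (fun v => (1 - Real.exp (-(v*1))) * v ^ (-α-1)) 0 hx,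
    mul_zero, smul_eq_mul]
  rw [show x ^ (α+1) * (x⁻¹ * ∫ v in Ioi (0:ℝ), (1 - Real.exp (-(v*1))) * v ^ (-α-1))
      = (x ^ (α+1) * x ^ (-1:ℝ)) * ∫ v in Ioi (0:ℝ), (1 - Real.exp (-(v*1))) * v ^ (-α-1) by
    rw [Real.rpow_neg_one]; ring, ← Real.rpow_add hx]
  norm_num

lemma J_pos (hα : 0 < α) (hα1 : α < 1) : 0 < J α 1 := by
  set f : ℝ → ℝ := fun u => (1 - Real.exp (-(u*1))) * u ^ (-α-1) with hf
  have hfi : IntegrableOn f (Ioi 0) := integrand_integrable hα hα1 zero_le_one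
  have hfnn : ∀ u ∈ Ioi (0:ℝ), 0 ≤ f u := by
    intro u hu
    have hu0 : 0 < u := mem_Ioi.1 hu
    have : Real.exp (-(u*1)) ≤ 1 := Real.exp_le_one_iff.2 (by linarith)
    have h2 := Real.rpow_nonneg hu0.le (-α-1)
    exact mul_nonneg (by linarith) h2
  set m : ℝ := (1 - Real.exp (-1)) * 2 ^ (-α-1) with hm
  have hmpos : 0 < m := by
    have h1 : Real.exp (-1) < 1 := Real.exp_lt_one_iff.2 (by norm_num)
    have h2 : (0:ℝ) < 2 ^ (-α-1) := Real.rpow_pos_of_pos (by norm_num) _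
    exact mul_pos (by linarith) h2
  have hstep : m ≤ ∫ u in Ioc (1:ℝ) 2, f u := by
    have hconst : (∫ _ in Ioc (1:ℝ) 2, m) = m := by
      rw [setIntegral_const, measureReal_def, Real.volume_Ioc]
      norm_num
    rw [← hconst]
    refine setIntegral_mono_on (integrableOn_const (by simp [Real.volume_Ioc]))
      (hfi.mono_set (fun u hu => mem_Ioi.2 (lt_trans one_pos hu.1)))
      measurableSet_Ioc ?_
    intro u hu
    have hu1 : 1 < u := hu.1
    have hu2 : u ≤ 2 := hu.2
    have hu0 : 0 < u := lt_trans one_pos hu1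
    have e1 : Real.exp (-(u*1)) ≤ Real.exp (-1) := Real.exp_le_exp.2 (by linarith)
    have e2 : (2:ℝ) ^ (-α-1) ≤ u ^ (-α-1) :=
      Real.rpow_le_rpow_of_nonpos hu0 hu2 (by linarith)
    have e4 : (0:ℝ) ≤ 2 ^ (-α-1) := (Real.rpow_pos_of_pos (by norm_num) _).le
    calc m ≤ (1 - Real.exp (-(u*1))) * 2 ^ (-α-1) := by
          refine mul_le_mul_of_nonneg_right (by linarith) e4
      _ ≤ f u := by
          refine mul_le_mul_of_nonneg_left e2 ?_
          have : Real.exp (-(u*1)) ≤ 1 := Real.exp_le_one_iff.2 (by linarith)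
          linarith
  have hmono : (∫ u in Ioc (1:ℝ) 2, f u) ≤ ∫ u in Ioi (0:ℝ), f u := by
    refine setIntegral_mono_set hfi ?_ ?_
    · exact (ae_restrict_iff' measurableSet_Ioi).2 (Filter.Eventually.of_forall hfnn)
    · exact HasSubset.Subset.eventuallyLE (fun u hu => mem_Ioi.2 (lt_trans one_pos hu.1))
  calc (0:ℝ) < m := hmpos
    _ ≤ ∫ u in Ioc (1:ℝ) 2, f u := hstep
    _ ≤ J α 1 := hmono

/-! ### Conditional negative definiteness, case `0 < α < 1` -/

lemma main_lt_one (hα : 0 < α) (hα1 : α < 1) (x : Fin n → ℝ × ℝ) (lam : Fin n → ℝ)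
    (hsum : (∑ i, lam i) = 0) :
    ∑ i, ∑ j, lam i * lam j * (|(x i).1 - (x j).1| + |(x i).2 - (x j).2|) ^ α ≤ 0 := by
  set d : Fin n → Fin n → ℝ := fun i j => |(x i).1 - (x j).1| + |(x i).2 - (x j).2| with hd
  have hdnn : ∀ i j, 0 ≤ d i j := fun i j => add_nonneg (abs_nonneg _) (abs_nonneg _)
  have hJ1 := J_pos hα hα1
  have hterm : ∀ i j, lam i * lam j * (d i j) ^ α * J α 1 = lam i * lam j * J α (d i j) := by
    intro i j
    rcases eq_or_lt_of_le (hdnn i j) with h0 | hpos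
    · rw [← h0, J_zero, Real.zero_rpow hα.ne']
      ring
    · rw [J_scale hpos]
      ring
  have hQJ : (∑ i, ∑ j, lam i * lam j * (d i j) ^ α) * J α 1 ≤ 0 := by
    rw [Finset.sum_mul]
    simp_rw [Finset.sum_mul, hterm]
    -- now show ∑ i, ∑ j, lam i * lam j * J α (d i j) ≤ 0
    have hrepr : (∑ i, ∑ j, lam i * lam j * J α (d i j))
        = ∫ u in Ioi (0:ℝ), ∑ i, ∑ j,
            lam i * lam j * ((1 - Real.exp (-(u * d i j))) * u ^ (-α-1)) := by
      rw [integral_finset_sum _ (fun i _ => integrable_finset_sum _ (fun j _ =>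
        ((integrand_integrable hα hα1 (hdnn i j)).const_mul _)))]
      refine Finset.sum_congr rfl fun i _ => ?_
      rw [integral_finset_sum _ (fun j _ =>
        ((integrand_integrable hα hα1 (hdnn i j)).const_mul _))]
      refine Finset.sum_congr rfl fun j _ => ?_
      rw [J, ← integral_const_mul]
    rw [hrepr]
    refine setIntegral_nonpos measurableSet_Ioi ?_
    intro u hu
    have hu0 : 0 < u := mem_Ioi.1 hu
    have hpow : (0:ℝ) ≤ u ^ (-α-1) := Real.rpow_nonneg hu0.le _
    have hker := exp_dist_kernel_nonneg u hu0.le (fun i => (x i).1) (fun i => (x i).2) lam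
    have hsplit : (∑ i, ∑ j, lam i * lam j * ((1 - Real.exp (-(u * d i j))) * u ^ (-α-1)))
        = u ^ (-α-1) * ((∑ i, lam i) * (∑ j, lam j))
          - u ^ (-α-1) * (∑ i, ∑ j, lam i * lam j * Real.exp (-(u * d i j))) := by
      rw [Finset.sum_mul_sum, Finset.mul_sum, Finset.mul_sum, ← Finset.sum_sub_distrib]
      refine Finset.sum_congr rfl fun i _ => ?_
      rw [Finset.mul_sum, Finset.mul_sum, ← Finset.sum_sub_distrib]
      refine Finset.sum_congr rfl fun j _ => by ring
    rw [hsplit, hsum]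
    simp only [zero_mul, mul_zero, zero_sub, neg_nonpos]
    exact mul_nonneg hpow hker
  calc (∑ i, ∑ j, lam i * lam j * (d i j) ^ α)
      = (∑ i, ∑ j, lam i * lam j * (d i j) ^ α) * J α 1 / J α 1 := by
        field_simp
    _ ≤ 0 := div_nonpos_of_nonpos_of_nonneg hQJ hJ1.le

/-! ### Case `α = 1` -/

lemma abs_kernel_nonpos (a : Fin n → ℝ) (lam : Fin n → ℝ) (hsum : (∑ i, lam i) = 0) :
    ∑ i, ∑ j, lam i * lam j * |a i - a j| ≤ 0 := by
  rcases isEmpty_or_nonempty (Fin n) with he | hne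
  · simp
  set m : ℝ := Finset.univ.inf' Finset.univ_nonempty a with hm
  set z : Fin n → ℝ := fun i => a i - m with hz
  have hznn : ∀ i, 0 ≤ z i :=
    fun i => sub_nonneg.2 (Finset.inf'_le a (Finset.mem_univ i))
  have hident : ∀ i j, lam i * lam j * |a i - a j|
      = (lam i * z i) * lam j + lam i * (lam j * z j)
        - 2 * (lam i * lam j * min (z i) (z j)) := by
    intro i j
    have habs : |a i - a j| = z i + z j - 2 * min (z i) (z j) := by
      rcases le_total (a i) (a j) with h | h
      · rw [abs_of_nonpos (by linarith), min_eq_left (by simp only [hz]; linarith)]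
        simp only [hz]; ring
      · rw [abs_of_nonneg (by linarith), min_eq_right (by simp only [hz]; linarith)]
        simp only [hz]; ring
    rw [habs]; ring
  have expand : (∑ i, ∑ j, lam i * lam j * |a i - a j|)
      = (∑ i, lam i * z i) * (∑ j, lam j) + (∑ i, lam i) * (∑ j, lam j * z j)
        - 2 * ∑ i, ∑ j, lam i * lam j * min (z i) (z j) := by
    simp_rw [hident]
    rw [Finset.sum_mul_sum, Finset.sum_mul_sum, Finset.mul_sum]
    rw [← Finset.sum_add_distrib, ← Finset.sum_sub_distrib]
    refine Finset.sum_congr rfl fun i _ => ?_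
    rw [Finset.mul_sum]
    rw [← Finset.sum_add_distrib, ← Finset.sum_sub_distrib]
  rw [expand, hsum]
  have := min_kernel_nonneg z hznn lam
  nlinarith

end SumAbsPowVariogram

/-- A function `γ : E → ℝ` on an additive group `E` is conditionally negative definite
(a variogram) if `γ 0 = 0`, `γ (-η) = γ η` for all `η`, and for every `n`, all points
`x₁, …, xₙ ∈ E` and all real weights `λ₁, …, λₙ` summing to `0`, one has
`∑ᵢ ∑ⱼ λᵢ λⱼ γ (xᵢ - xⱼ) ≤ 0`. -/
def IsCondNegDefFun {E : Type*} [AddCommGroup E] (γ : E → ℝ) : Prop :=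
  γ 0 = 0 ∧ (∀ η, γ (-η) = γ η) ∧
    ∀ (n : ℕ) (x : Fin n → E) (lam : Fin n → ℝ), (∑ i, lam i) = 0 →
      ∑ i, ∑ j, lam i * lam j * γ (x i - x j) ≤ 0

/-- For `α > 0`, the function `γ(s, t) = (|s| + |t|)^α` on `ℝ × ℝ` is conditionally
negative definite (a variogram) if and only if `α ≤ 1`. -/
theorem sum_abs_pow_variogram_iff (α : ℝ) (hα : 0 < α) :
    IsCondNegDefFun (fun p : ℝ × ℝ => (|p.1| + |p.2|) ^ α) ↔ α ≤ 1 := by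
  constructor
  · intro h
    have key := h.2.2 4 ![((0:ℝ),(0:ℝ)), (1,0), (0,1), (1,1)] ![(1:ℝ),-1,-1,1]
      (by simp [Fin.sum_univ_four])
    simp only [Fin.sum_univ_four, Matrix.cons_val_zero, Matrix.cons_val_one, Matrix.head_cons,
      Matrix.cons_val_two, Matrix.tail_cons, Matrix.cons_val_three, Prod.mk_sub_mk] at key
    norm_num at key
    rw [Real.zero_rpow hα.ne'] at key
    norm_num [Real.one_rpow] at key
    have h2 : (2:ℝ) ^ α ≤ 2 ^ (1:ℝ) := by
      rw [Real.rpow_one]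
      linarith
    exact (Real.rpow_le_rpow_left_iff one_lt_two).1 h2
  · intro hα1
    refine ⟨?_, ?_, ?_⟩
    · simp [Real.zero_rpow hα.ne']
    · intro η
      simp [Prod.fst_neg, Prod.snd_neg, abs_neg]
    · intro n x lam hsum
      simp only [Prod.fst_sub, Prod.snd_sub]
      rcases lt_or_eq_of_le hα1 with hlt | heq
      · exact SumAbsPowVariogram.main_lt_one hα hlt x lam hsum
      · subst heq
        simp only [Real.rpow_one]
        have hs := SumAbsPowVariogram.abs_kernel_nonpos (fun i => (x i).1) lam hsum
        have ht := SumAbsPowVariogram.abs_kernel_nonpos (fun i => (x i).2) lam hsum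
        have expand : (∑ i, ∑ j, lam i * lam j * (|(x i).1 - (x j).1| + |(x i).2 - (x j).2|))
            = (∑ i, ∑ j, lam i * lam j * |(x i).1 - (x j).1|)
              + ∑ i, ∑ j, lam i * lam j * |(x i).2 - (x j).2| := by
          rw [← Finset.sum_add_distrib]
          refine Finset.sum_congr rfl fun i _ => ?_
          rw [← Finset.sum_add_distrib]
          exact Finset.sum_congr rfl fun j _ => by ring
        rw [expand]
        linarith
end

section
/- Let d ≥ 1 and 0 < α ≤ 2. The modified BRC function C : ℝ^d × ℝ → ℝ defined by C(x, e) = exp(−(√(‖x‖² + e²))^α), where ‖·‖ is the Euclidean norm on ℝ^d, is a positive definite function on ℝ^d × ℝ. -/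
open scoped BigOperators
open MeasureTheory Set

namespace BRCaux

/-- finite-sum positive semidefiniteness of a kernel -/
def PSDK (n : ℕ) (K : Fin n → Fin n → ℝ) : Prop :=
  ∀ lam : Fin n → ℝ, 0 ≤ ∑ i, ∑ j, lam i * lam j * K i j

variable {n : ℕ}

lemma PSDK.of_eq {K L : Fin n → Fin n → ℝ} (hK : PSDK n K) (h : ∀ i j, K i j = L i j) :
    PSDK n L := by
  have : L = K := by funext i j; exact (h i j).symm
  rwa [this]

lemma PSDK.smul {K : Fin n → Fin n → ℝ} {c : ℝ} (hc : 0 ≤ c) (hK : PSDK n K) :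
    PSDK n (fun i j => c * K i j) := by
  intro lam
  have h : ∀ i j : Fin n, lam i * lam j * (c * K i j) = c * (lam i * lam j * K i j) := by
    intros; ring
  simp_rw [h, ← Finset.mul_sum]
  exact mul_nonneg hc (hK lam)

lemma PSDK.gram {F : Type*} [NormedAddCommGroup F] [InnerProductSpace ℝ F]
    (v : Fin n → F) : PSDK n (fun i j => (inner ℝ (v i) (v j) : ℝ)) := by
  intro lam
  have : ∑ i, ∑ j, lam i * lam j * (inner ℝ (v i) (v j) : ℝ)
      = (inner ℝ (∑ i, lam i • v i) (∑ j, lam j • v j) : ℝ) := by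
    rw [sum_inner]
    refine Finset.sum_congr rfl fun i _ => ?_
    rw [inner_sum]
    refine Finset.sum_congr rfl fun j _ => ?_
    rw [real_inner_smul_left, real_inner_smul_right]; ring
  rw [this]
  exact real_inner_self_nonneg

lemma PSDK.one : PSDK n (fun _ _ => (1 : ℝ)) := by
  intro lam
  calc (0:ℝ) ≤ (∑ i, lam i) * (∑ i, lam i) := mul_self_nonneg _
    _ = ∑ i, ∑ j, lam i * lam j * 1 := by rw [Finset.sum_mul_sum]; simp

lemma PSDK.mul {K L : Fin n → Fin n → ℝ} (hK : PSDK n K) (hsym : ∀ i j, K j i = K i j)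
    (hL : PSDK n L) : PSDK n (fun i j => K i j * L i j) := by
  have hM : (Matrix.of K).PosSemidef := by
    refine Matrix.posSemidef_iff_dotProduct_mulVec.mpr ⟨?_, ?_⟩
    · ext i j
      simp [Matrix.conjTranspose_apply, hsym i j]
    · intro x
      have h := hK x
      simp only [star_trivial, dotProduct, Matrix.mulVec, Matrix.of_apply]
      have : ∀ i : Fin n, x i * (∑ j, K i j * x j) = ∑ j, x i * x j * K i j := by
        intro i
        rw [Finset.mul_sum]
        exact Finset.sum_congr rfl fun j _ => by ring
      simp_rw [this]
      exact h
  open scoped MatrixOrder in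
  obtain ⟨B, hB⟩ := CStarAlgebra.nonneg_iff_eq_star_mul_self.mp hM.nonneg
  have hKij : ∀ i j, K i j = ∑ m, B m i * B m j := by
    intro i j
    have h := congrFun (congrFun hB i) j
    simpa [Matrix.mul_apply, Matrix.conjTranspose_apply, Matrix.star_eq_conjTranspose] using h
  intro lam
  have h1 : ∀ i j : Fin n, lam i * lam j * (K i j * L i j)
      = ∑ m, (lam i * B m i) * (lam j * B m j) * L i j := by
    intro i j
    rw [hKij i j, Finset.sum_mul, Finset.mul_sum]
    exact Finset.sum_congr rfl fun m _ => by ring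
  have key : ∑ i, ∑ j, lam i * lam j * (K i j * L i j)
      = ∑ m, ∑ i, ∑ j, (lam i * B m i) * (lam j * B m j) * L i j := by
    simp_rw [h1]
    calc ∑ i, ∑ j, ∑ m, (lam i * B m i) * (lam j * B m j) * L i j
        = ∑ i, ∑ m, ∑ j, (lam i * B m i) * (lam j * B m j) * L i j :=
          Finset.sum_congr rfl fun i _ => Finset.sum_comm
      _ = ∑ m, ∑ i, ∑ j, (lam i * B m i) * (lam j * B m j) * L i j := Finset.sum_comm
  rw [key]
  exact Finset.sum_nonneg fun m _ => hL fun i => lam i * B m i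

lemma PSDK.pow {K : Fin n → Fin n → ℝ} (hK : PSDK n K) (hsym : ∀ i j, K j i = K i j) :
    ∀ k : ℕ, PSDK n (fun i j => K i j ^ k)
  | 0 => by simpa using PSDK.one
  | (k + 1) => by
      have h := (hK.pow hsym k).mul (fun i j => by rw [hsym]) hK
      exact h.of_eq fun i j => (pow_succ _ _).symm

lemma PSDK.sum {ι : Type*} (s : Finset ι) {K : ι → Fin n → Fin n → ℝ}
    (hK : ∀ m ∈ s, PSDK n (K m)) : PSDK n (fun i j => ∑ m ∈ s, K m i j) := by
  intro lam
  have h : ∑ i, ∑ j, lam i * lam j * (∑ m ∈ s, K m i j)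
      = ∑ m ∈ s, ∑ i, ∑ j, lam i * lam j * K m i j := by
    simp_rw [Finset.mul_sum]
    calc ∑ i, ∑ j, ∑ m ∈ s, lam i * lam j * K m i j
        = ∑ i, ∑ m ∈ s, ∑ j, lam i * lam j * K m i j :=
          Finset.sum_congr rfl fun i _ => Finset.sum_comm
      _ = ∑ m ∈ s, ∑ i, ∑ j, lam i * lam j * K m i j := Finset.sum_comm
  rw [h]
  exact Finset.sum_nonneg fun m hm => hK m hm lam

lemma PSDK.expK {K : Fin n → Fin n → ℝ} (hK : PSDK n K) (hsym : ∀ i j, K j i = K i j) :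
    PSDK n (fun i j => Real.exp (K i j)) := by
  intro lam
  have hpart : ∀ N : ℕ, 0 ≤ ∑ i, ∑ j, lam i * lam j * (∑ k ∈ Finset.range N, K i j ^ k / k.factorial) := by
    intro N
    refine PSDK.sum (Finset.range N) (K := fun k i j => K i j ^ k / k.factorial) (fun k _ => ?_) lam
    have h := PSDK.smul (c := ((k.factorial : ℝ))⁻¹) (by positivity) (hK.pow hsym k)
    exact h.of_eq fun i j => by rw [inv_mul_eq_div]
  have htend : Filter.Tendsto
      (fun N => ∑ i, ∑ j, lam i * lam j * (∑ k ∈ Finset.range N, K i j ^ k / k.factorial))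
      Filter.atTop (nhds (∑ i, ∑ j, lam i * lam j * Real.exp (K i j))) := by
    refine tendsto_finset_sum _ fun i _ => tendsto_finset_sum _ fun j _ => ?_
    have h : Filter.Tendsto (fun N => ∑ k ∈ Finset.range N, K i j ^ k / k.factorial)
        Filter.atTop (nhds (Real.exp (K i j))) := by
      rw [Real.exp_eq_exp_ℝ]
      exact (NormedSpace.expSeries_div_hasSum_exp (K i j)).tendsto_sum_nat
    exact h.const_mul _
  exact ge_of_tendsto' htend hpart

lemma PSDK.diag {K : Fin n → Fin n → ℝ} (hK : PSDK n K) (D : Fin n → ℝ) :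
    PSDK n (fun i j => D i * D j * K i j) := by
  intro lam
  have h : ∀ i j : Fin n, lam i * lam j * (D i * D j * K i j)
      = (lam i * D i) * (lam j * D j) * K i j := by intros; ring
  simp_rw [h]
  exact hK fun i => lam i * D i

lemma gaussPSD {F : Type*} [NormedAddCommGroup F] [InnerProductSpace ℝ F]
    (n : ℕ) (v : Fin n → F) {t : ℝ} (ht : 0 ≤ t) :
    PSDK n (fun i j => Real.exp (-(‖v i - v j‖ ^ 2 * t))) := by
  have hG : PSDK n (fun i j => (2 * t) * (inner ℝ (v i) (v j) : ℝ)) :=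
    (PSDK.gram v).smul (by positivity) |>.of_eq fun i j => rfl
  have hsym : ∀ i j : Fin n, (2 * t) * (inner ℝ (v j) (v i) : ℝ)
      = (2 * t) * (inner ℝ (v i) (v j) : ℝ) := fun i j => by rw [real_inner_comm]
  have hE := (hG.expK hsym).diag (fun i => Real.exp (-(‖v i‖ ^ 2 * t)))
  refine hE.of_eq fun i j => ?_
  rw [← Real.exp_add, ← Real.exp_add]
  congr 1
  have h := norm_sub_sq_real (v i) (v j)
  nlinarith [h]

variable {β : ℝ}

lemma integrand_meas (u : ℝ) :
    AEStronglyMeasurable (fun t : ℝ => (1 - Real.exp (-(u * t))) * t ^ (-1 - β))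
      (volume.restrict (Ioi (0:ℝ))) := by
  apply Measurable.aestronglyMeasurable
  exact (measurable_const.sub ((measurable_id.const_mul u).neg.exp)).mul
    (measurable_id'.pow_const _)

lemma one_sub_exp_nonneg {u t : ℝ} (hu : 0 ≤ u) (ht : 0 ≤ t) :
    0 ≤ 1 - Real.exp (-(u * t)) := by
  have : Real.exp (-(u * t)) ≤ 1 := Real.exp_le_one_iff.mpr (by nlinarith)
  linarith

lemma one_sub_exp_le {x : ℝ} : 1 - Real.exp (-x) ≤ x := by
  have := Real.add_one_le_exp (-x); linarith

lemma integrable_aux (hβ0 : 0 < β) (hβ1 : β < 1) {u : ℝ} (hu : 0 ≤ u) :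
    IntegrableOn (fun t : ℝ => (1 - Real.exp (-(u * t))) * t ^ (-1 - β)) (Ioi 0) := by
  rw [← Set.Ioc_union_Ioi_eq_Ioi (zero_le_one (α := ℝ))]
  apply IntegrableOn.union
  · -- on Ioc 0 1, dominate by u * t ^ (-β)
    have hg : IntegrableOn (fun t : ℝ => u * t ^ (-β)) (Ioc 0 1) := by
      apply Integrable.const_mul
      have := (intervalIntegral.integrableOn_Ioo_rpow_iff (s := -β) one_pos).mpr (by linarith)
      exact (integrableOn_Ioc_iff_integrableOn_Ioo).mpr this
    refine Integrable.mono' hg ((integrand_meas u).mono_set Ioc_subset_Ioi_self) ?_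
    · filter_upwards [ae_restrict_mem measurableSet_Ioc] with t ht
      have ht0 : 0 < t := ht.1
      have h1 : 0 ≤ 1 - Real.exp (-(u * t)) := one_sub_exp_nonneg hu ht0.le
      have h2 : 1 - Real.exp (-(u * t)) ≤ u * t := one_sub_exp_le
      have hr : (0:ℝ) ≤ t ^ (-1 - β) := Real.rpow_nonneg ht0.le _
      rw [Real.norm_eq_abs, abs_of_nonneg (mul_nonneg h1 hr)]
      have : (u * t) * t ^ (-1 - β) = u * t ^ (-β) := by
        rw [mul_assoc]
        congr 1
        rw [← Real.rpow_one_add' ht0.le (by intro h; linarith : (1:ℝ) + (-1 - β) ≠ 0)]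
        · ring_nf
      calc (1 - Real.exp (-(u * t))) * t ^ (-1 - β) ≤ (u * t) * t ^ (-1 - β) :=
            mul_le_mul_of_nonneg_right h2 hr
        _ = u * t ^ (-β) := this
  · -- on Ioi 1, dominate by t ^ (-1-β)
    have hg : IntegrableOn (fun t : ℝ => t ^ (-1 - β)) (Ioi 1) :=
      integrableOn_Ioi_rpow_of_lt (by linarith) one_pos
    refine Integrable.mono' hg ((integrand_meas u).mono_set (Ioi_subset_Ioi zero_le_one)) ?_
    filter_upwards [ae_restrict_mem measurableSet_Ioi] with t ht
    have ht0 : (0:ℝ) < t := lt_trans one_pos ht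
    have h1 : 0 ≤ 1 - Real.exp (-(u * t)) := one_sub_exp_nonneg hu ht0.le
    have h3 : 1 - Real.exp (-(u * t)) ≤ 1 := by linarith [Real.exp_pos (-(u * t))]
    have hr : (0:ℝ) ≤ t ^ (-1 - β) := Real.rpow_nonneg ht0.le _
    rw [Real.norm_eq_abs, abs_of_nonneg (mul_nonneg h1 hr)]
    calc (1 - Real.exp (-(u * t))) * t ^ (-1 - β) ≤ 1 * t ^ (-1 - β) :=
          mul_le_mul_of_nonneg_right h3 hr
      _ = t ^ (-1 - β) := one_mul _

/-- the base integral -/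
noncomputable def Ibeta (β : ℝ) : ℝ := ∫ t in Ioi (0:ℝ), (1 - Real.exp (-t)) * t ^ (-1 - β)

lemma Ibeta_base_eq :
    (fun t : ℝ => (1 - Real.exp (-(1 * t))) * t ^ (-1 - β))
      = fun t : ℝ => (1 - Real.exp (-t)) * t ^ (-1 - β) := by
  funext t; rw [one_mul]

lemma Ibeta_pos (hβ0 : 0 < β) (hβ1 : β < 1) : 0 < Ibeta β := by
  have hint : IntegrableOn (fun t : ℝ => (1 - Real.exp (-t)) * t ^ (-1 - β)) (Ioi 0) := by
    rw [← Ibeta_base_eq]; exact integrable_aux hβ0 hβ1 zero_le_one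
  have hnonneg : ∀ t ∈ Ioi (0:ℝ), 0 ≤ (1 - Real.exp (-t)) * t ^ (-1 - β) := by
    intro t ht
    have h1 : 0 ≤ 1 - Real.exp (-t) := by
      have : Real.exp (-t) ≤ 1 := Real.exp_le_one_iff.mpr (by simp at ht ⊢; linarith)
      linarith
    exact mul_nonneg h1 (Real.rpow_nonneg (le_of_lt ht) _)
  set c : ℝ := (1 - Real.exp (-1)) * 2 ^ (-1 - β) with hc
  have hcpos : 0 < c := by
    apply mul_pos
    · have : Real.exp (-1) < 1 := Real.exp_lt_one_iff.mpr (by norm_num)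
      linarith
    · positivity
  have hlow : ∀ t ∈ Ioc (1:ℝ) 2, c ≤ (1 - Real.exp (-t)) * t ^ (-1 - β) := by
    intro t ht
    have h1 : Real.exp (-t) ≤ Real.exp (-1) := Real.exp_le_exp.mpr (by linarith [ht.1])
    have h2 : t ^ (-1 - β) ≥ 2 ^ (-1 - β) :=
      Real.rpow_le_rpow_of_nonpos (by linarith [ht.1]) ht.2 (by linarith)
    have h3 : 0 ≤ 1 - Real.exp (-t) := by
      have : Real.exp (-t) ≤ 1 := Real.exp_le_one_iff.mpr (by linarith [ht.1])
      linarith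
    have h4 : (0:ℝ) ≤ 2 ^ (-1 - β) := by positivity
    calc c = (1 - Real.exp (-1)) * 2 ^ (-1 - β) := hc
      _ ≤ (1 - Real.exp (-t)) * 2 ^ (-1 - β) := by nlinarith
      _ ≤ (1 - Real.exp (-t)) * t ^ (-1 - β) := by nlinarith
  have hmeas2 : volume (Ioc (1:ℝ) 2) ≠ ⊤ := by simp
  have hIoc : IntegrableOn (fun t : ℝ => (1 - Real.exp (-t)) * t ^ (-1 - β)) (Ioc 1 2) :=
    hint.mono_set (fun t ht => lt_trans one_pos ht.1)
  have h5 := setIntegral_ge_of_const_le measurableSet_Ioc hmeas2 hlow hIoc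
  have h6 : volume.real (Ioc (1:ℝ) 2) = 1 := by
    rw [Real.volume_real_Ioc]; norm_num
  rw [h6, one_smul] at h5
  have h7 : ∫ t in Ioc (1:ℝ) 2, (1 - Real.exp (-t)) * t ^ (-1 - β)
      ≤ ∫ t in Ioi (0:ℝ), (1 - Real.exp (-t)) * t ^ (-1 - β) := by
    apply setIntegral_mono_set hint
    · filter_upwards [ae_restrict_mem measurableSet_Ioi] with t ht
      exact hnonneg t ht
    · exact HasSubset.Subset.eventuallyLE (fun t ht => lt_trans one_pos ht.1)
  calc (0:ℝ) < c := hcpos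
    _ ≤ _ := h5
    _ ≤ Ibeta β := h7

lemma J_eq (hβ0 : 0 < β) (hβ1 : β < 1) {u : ℝ} (hu : 0 ≤ u) :
    ∫ t in Ioi (0:ℝ), (1 - Real.exp (-(u * t))) * t ^ (-1 - β) = u ^ β * Ibeta β := by
  rcases eq_or_lt_of_le hu with h | hupos
  · rw [← h]
    simp [Real.zero_rpow (ne_of_gt hβ0)]
  · have h1 : ∀ t ∈ Ioi (0:ℝ), (1 - Real.exp (-(u * t))) * t ^ (-1 - β)
        = u ^ ((1:ℝ) + β) * ((1 - Real.exp (-(u * t))) * (u * t) ^ (-1 - β)) := by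
      intro t ht
      rw [Real.mul_rpow hupos.le (le_of_lt ht)]
      have hru : u ^ ((1:ℝ) + β) * u ^ (-1 - β) = 1 := by
        rw [← Real.rpow_add hupos]
        norm_num
      calc (1 - Real.exp (-(u * t))) * t ^ (-1 - β)
          = (u ^ ((1:ℝ) + β) * u ^ (-1 - β)) * ((1 - Real.exp (-(u * t))) * t ^ (-1 - β)) := by
            rw [hru, one_mul]
        _ = u ^ ((1:ℝ) + β) * ((1 - Real.exp (-(u * t))) * (u ^ (-1 - β) * t ^ (-1 - β))) := by
            ring
    rw [setIntegral_congr_fun measurableSet_Ioi h1]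
    rw [MeasureTheory.integral_const_mul]
    have h2 := MeasureTheory.integral_comp_mul_left_Ioi
      (fun s : ℝ => (1 - Real.exp (-s)) * s ^ (-1 - β)) 0 hupos
    rw [mul_zero] at h2
    rw [h2, smul_eq_mul, ← mul_assoc]
    congr 1
    rw [← Real.rpow_neg_one u, ← Real.rpow_add hupos]
    norm_num

lemma aug_eq {n : ℕ} (lam a : Fin n → ℝ) (c : Fin n → Fin n → ℝ)
    (E : Fin (n+1) → Fin (n+1) → ℝ)
    (hE00 : E 0 0 = 1) (hE0 : ∀ j, E 0 j.succ = a j) (hE0' : ∀ i, E i.succ 0 = a i)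
    (hEij : ∀ i j, E i.succ j.succ = c i j) :
    ∑ i, ∑ j, (Fin.cons (-(∑ k, lam k)) lam : Fin (n+1) → ℝ) i *
        (Fin.cons (-(∑ k, lam k)) lam : Fin (n+1) → ℝ) j * E i j
      = ∑ i, ∑ j, lam i * lam j * ((1 - a i) + (1 - a j) - (1 - c i j)) := by
  simp only [Fin.sum_univ_succ, Fin.cons_zero, Fin.cons_succ, hE00, hE0, hE0', hEij, mul_one]
  have e1 : ∀ x : Fin n, (-(∑ k, lam k)) * lam x * a x
      = -((∑ k, lam k) * (lam x * a x)) := fun x => by ring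
  have e2 : ∀ x : Fin n, (lam x * -(∑ k, lam k)) * a x
      = -((∑ k, lam k) * (lam x * a x)) := fun x => by ring
  have e3 : ∀ i j : Fin n, lam i * lam j * ((1 - a i) + (1 - a j) - (1 - c i j))
      = lam i * lam j - (lam i * a i) * lam j
        - lam i * (lam j * a j) + lam i * lam j * c i j := by intros; ring
  simp_rw [e1, e2, e3, Finset.sum_add_distrib, Finset.sum_sub_distrib,
    Finset.sum_neg_distrib, ← Finset.mul_sum, ← Finset.sum_mul]
  ring

theorem keyPSD {F : Type*} [NormedAddCommGroup F] [InnerProductSpace ℝ F]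
    {α : ℝ} (hα0 : 0 < α) (hα2 : α ≤ 2) (n : ℕ) (v : Fin n → F) :
    PSDK n (fun i j => Real.exp (-(‖v i - v j‖ ^ α))) := by
  have hK : PSDK n (fun i j => ‖v i‖ ^ α + ‖v j‖ ^ α - ‖v i - v j‖ ^ α) := by
    rcases lt_or_eq_of_le hα2 with hlt | heq
    · -- α < 2 : use the subordination integral representation
      set β := α / 2 with hβ
      have hβ0 : 0 < β := by rw [hβ]; linarith
      have hβ1 : β < 1 := by rw [hβ]; linarith
      have hψ : ∀ z : F, ‖z‖ ^ α
          = (Ibeta β)⁻¹ * ∫ t in Ioi (0:ℝ),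
              (1 - Real.exp (-((‖z‖ ^ 2) * t))) * t ^ (-1 - β) := by
        intro z
        rw [J_eq hβ0 hβ1 (by positivity : (0:ℝ) ≤ ‖z‖ ^ 2)]
        have hIz : ((‖z‖ ^ 2 : ℝ)) ^ β = ‖z‖ ^ α := by
          rw [← Real.rpow_natCast ‖z‖ 2, ← Real.rpow_mul (norm_nonneg z)]
          congr 1
          push_cast
          rw [hβ]; ring
        rw [hIz]
        have hI := (Ibeta_pos hβ0 hβ1).ne'
        field_simp
      intro lam
      have hint : ∀ z : F, IntegrableOn
          (fun t : ℝ => (1 - Real.exp (-((‖z‖ ^ 2) * t))) * t ^ (-1 - β)) (Ioi 0) :=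
        fun z => integrable_aux hβ0 hβ1 (by positivity)
      have h1 : ∀ i j : Fin n,
          lam i * lam j * (‖v i‖ ^ α + ‖v j‖ ^ α - ‖v i - v j‖ ^ α)
          = (Ibeta β)⁻¹ * ∫ t in Ioi (0:ℝ), lam i * lam j *
              ((1 - Real.exp (-((‖v i‖ ^ 2) * t))) * t ^ (-1 - β)
               + (1 - Real.exp (-((‖v j‖ ^ 2) * t))) * t ^ (-1 - β)
               - (1 - Real.exp (-((‖v i - v j‖ ^ 2) * t))) * t ^ (-1 - β)) := by
        intro i j
        have hintadd : IntegrableOn (fun t : ℝ =>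
            (1 - Real.exp (-((‖v i‖ ^ 2) * t))) * t ^ (-1 - β)
            + (1 - Real.exp (-((‖v j‖ ^ 2) * t))) * t ^ (-1 - β)) (Ioi 0) :=
          (hint (v i)).add (hint (v j))
        rw [MeasureTheory.integral_const_mul,
          MeasureTheory.integral_sub hintadd (hint (v i - v j)),
          MeasureTheory.integral_add (hint (v i)) (hint (v j)),
          hψ (v i), hψ (v j), hψ (v i - v j)]
        ring
      simp_rw [h1, ← Finset.mul_sum]
      have hgint : ∀ i j : Fin n, Integrable (fun t : ℝ => lam i * lam j *
          ((1 - Real.exp (-((‖v i‖ ^ 2) * t))) * t ^ (-1 - β)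
           + (1 - Real.exp (-((‖v j‖ ^ 2) * t))) * t ^ (-1 - β)
           - (1 - Real.exp (-((‖v i - v j‖ ^ 2) * t))) * t ^ (-1 - β)))
          (volume.restrict (Ioi 0)) :=
        fun i j => (((hint (v i)).add (hint (v j))).sub (hint (v i - v j))).const_mul _
      have e1 : ∀ i : Fin n, ∑ j, ∫ t in Ioi (0:ℝ), lam i * lam j *
          ((1 - Real.exp (-((‖v i‖ ^ 2) * t))) * t ^ (-1 - β)
           + (1 - Real.exp (-((‖v j‖ ^ 2) * t))) * t ^ (-1 - β)
           - (1 - Real.exp (-((‖v i - v j‖ ^ 2) * t))) * t ^ (-1 - β))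
          = ∫ t in Ioi (0:ℝ), ∑ j, lam i * lam j *
          ((1 - Real.exp (-((‖v i‖ ^ 2) * t))) * t ^ (-1 - β)
           + (1 - Real.exp (-((‖v j‖ ^ 2) * t))) * t ^ (-1 - β)
           - (1 - Real.exp (-((‖v i - v j‖ ^ 2) * t))) * t ^ (-1 - β)) :=
        fun i => (MeasureTheory.integral_finset_sum _ (fun j _ => hgint i j)).symm
      simp_rw [e1]
      rw [← MeasureTheory.integral_finset_sum _
        (fun i _ => MeasureTheory.integrable_finset_sum _ (fun j _ => hgint i j))]
      apply mul_nonneg (inv_nonneg.mpr (Ibeta_pos hβ0 hβ1).le)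
      apply MeasureTheory.setIntegral_nonneg measurableSet_Ioi
      intro t ht
      have hw : (0:ℝ) ≤ t ^ (-1 - β) := Real.rpow_nonneg (le_of_lt ht) _
      have hfac : ∀ i j : Fin n, lam i * lam j *
          ((1 - Real.exp (-((‖v i‖ ^ 2) * t))) * t ^ (-1 - β)
           + (1 - Real.exp (-((‖v j‖ ^ 2) * t))) * t ^ (-1 - β)
           - (1 - Real.exp (-((‖v i - v j‖ ^ 2) * t))) * t ^ (-1 - β))
          = (lam i * lam j * ((1 - Real.exp (-((‖v i‖ ^ 2) * t)))
              + (1 - Real.exp (-((‖v j‖ ^ 2) * t)))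
              - (1 - Real.exp (-((‖v i - v j‖ ^ 2) * t))))) * t ^ (-1 - β) := by
        intros; ring
      simp_rw [hfac, ← Finset.sum_mul]
      apply mul_nonneg _ hw
      have h00 : Real.exp (-((‖(Fin.cons 0 v : Fin (n+1) → F) 0
          - (Fin.cons 0 v : Fin (n+1) → F) 0‖ ^ 2) * t)) = 1 := by
        simp
      have h0 : ∀ j : Fin n, Real.exp (-((‖(Fin.cons 0 v : Fin (n+1) → F) 0
          - (Fin.cons 0 v : Fin (n+1) → F) j.succ‖ ^ 2) * t))
          = Real.exp (-((‖v j‖ ^ 2) * t)) := by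
        intro j; simp [norm_sub_rev]
      have h0' : ∀ i : Fin n, Real.exp (-((‖(Fin.cons 0 v : Fin (n+1) → F) i.succ
          - (Fin.cons 0 v : Fin (n+1) → F) 0‖ ^ 2) * t))
          = Real.exp (-((‖v i‖ ^ 2) * t)) := by
        intro i; simp
      have hij : ∀ i j : Fin n, Real.exp (-((‖(Fin.cons 0 v : Fin (n+1) → F) i.succ
          - (Fin.cons 0 v : Fin (n+1) → F) j.succ‖ ^ 2) * t))
          = Real.exp (-((‖v i - v j‖ ^ 2) * t)) := by
        intro i j; simp
      rw [← aug_eq lam (fun i => Real.exp (-((‖v i‖ ^ 2) * t)))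
        (fun i j => Real.exp (-((‖v i - v j‖ ^ 2) * t)))
        (fun i j => Real.exp (-((‖(Fin.cons 0 v : Fin (n+1) → F) i
            - (Fin.cons 0 v : Fin (n+1) → F) j‖ ^ 2) * t))) h00 h0 h0' hij]
      exact gaussPSD (n+1) (Fin.cons 0 v) (le_of_lt ht) _
    · -- α = 2 : Gram matrix identity
      subst heq
      refine ((PSDK.gram v).smul (by norm_num : (0:ℝ) ≤ 2)).of_eq fun i j => ?_
      have e2 : ∀ z : F, ‖z‖ ^ (2:ℝ) = ‖z‖ ^ (2:ℕ) := fun z => by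
        rw [show (2:ℝ) = ((2:ℕ):ℝ) by norm_num, Real.rpow_natCast]
      rw [e2, e2, e2, norm_sub_sq_real]
      ring
  have hsym : ∀ i j : Fin n, ‖v j‖ ^ α + ‖v i‖ ^ α - ‖v j - v i‖ ^ α
      = ‖v i‖ ^ α + ‖v j‖ ^ α - ‖v i - v j‖ ^ α := by
    intro i j; rw [norm_sub_rev]; ring
  have hE := (hK.expK hsym).diag (fun i => Real.exp (-(‖v i‖ ^ α)))
  refine hE.of_eq fun i j => ?_
  rw [← Real.exp_add, ← Real.exp_add]
  congr 1
  ring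

end BRCaux


/-- For `d ≥ 1` and `0 < α ≤ 2`, the modified BRC function
`C(x, e) = exp(−(√(‖x‖² + e²))^α)` on `ℝ^d × ℝ` (with the Euclidean norm on `ℝ^d`)
is positive definite. -/
theorem modified_brc_posDef (d : ℕ) (hd : 1 ≤ d) (α : ℝ) (hα0 : 0 < α) (hα2 : α ≤ 2) :
    IsPosDefFun (fun p : EuclideanSpace ℝ (Fin d) × ℝ =>
      Real.exp (-(Real.sqrt (‖p.1‖ ^ 2 + p.2 ^ 2)) ^ α)) := by
  intro n x lam
  set v : Fin n → WithLp 2 (EuclideanSpace ℝ (Fin d) × ℝ) :=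
    fun i => (WithLp.equiv 2 _).symm (x i) with hv
  have hnorm : ∀ i j : Fin n,
      Real.sqrt (‖(x i - x j).1‖ ^ 2 + (x i - x j).2 ^ 2) = ‖v i - v j‖ := by
    intro i j
    have hsub : v i - v j = (WithLp.equiv 2 _).symm (x i - x j) := rfl
    rw [hsub]
    have h2 := WithLp.prod_norm_sq_eq_of_L2
      ((WithLp.equiv 2 (EuclideanSpace ℝ (Fin d) × ℝ)).symm (x i - x j))
    rw [WithLp.equiv_symm_apply, WithLp.toLp_fst, WithLp.toLp_snd, ← WithLp.equiv_symm_apply] at h2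
    rw [show ‖(x i - x j).1‖ ^ 2 + (x i - x j).2 ^ 2
        = ‖(WithLp.equiv 2 (EuclideanSpace ℝ (Fin d) × ℝ)).symm (x i - x j)‖ ^ 2 by
      rw [h2, Real.norm_eq_abs, sq_abs]]
    exact Real.sqrt_sq (norm_nonneg _)
  simp_rw [hnorm]
  exact BRCaux.keyPSD hα0 hα2 n v lam
end

section
/- Let γ : ℝ^n → ℝ be a continuous conditionally negative definite function with γ ≥ 0, and let f : [0, ∞) → ℝ be a Bernstein function, i.e. f(λ) = bλ + ∫_{(0,∞)} (1 − e^{−sλ}) μ(ds) for some b ≥ 0 and some measure μ on (0, ∞) satisfying ∫_{(0,∞)} s/(1+s) μ(ds) < ∞. Then the composition f ∘ γ : ℝ^n → ℝ is a continuous conditionally negative definite function. -/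
open MeasureTheory

/-- `f : ℝ → ℝ` is a Bernstein function (on `[0, ∞)`) if there are `b ≥ 0` and a measure `μ`
on `(0, ∞)` with `∫ s/(1+s) μ(ds) < ∞` such that
`f(λ) = bλ + ∫_{(0,∞)} (1 − e^{−sλ}) μ(ds)` for all `λ ≥ 0`. -/
def IsBernstein (f : ℝ → ℝ) : Prop :=
  ∃ (b : ℝ) (μ : Measure ℝ), 0 ≤ b ∧
    (∫⁻ s in Set.Ioi (0 : ℝ), ENNReal.ofReal (s / (1 + s)) ∂μ) < ⊤ ∧
    ∀ l : ℝ, 0 ≤ l →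
      f l = b * l + ∫ s in Set.Ioi (0 : ℝ), (1 - Real.exp (-(s * l))) ∂μ

/-- Schur product theorem, quadratic-form version. -/
lemma schur_sum {m : ℕ} {A B : Fin m → Fin m → ℝ}
    (hBsymm : ∀ i j, B i j = B j i)
    (hA : ∀ v : Fin m → ℝ, 0 ≤ ∑ i, ∑ j, v i * v j * A i j)
    (hB : ∀ v : Fin m → ℝ, 0 ≤ ∑ i, ∑ j, v i * v j * B i j)
    (v : Fin m → ℝ) :
    0 ≤ ∑ i, ∑ j, v i * v j * (A i j * B i j) := by
  have hM : (Matrix.of B).PosSemidef := by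
    refine Matrix.posSemidef_iff_dotProduct_mulVec.mpr ?_
    constructor
    · ext i j
      simp [Matrix.conjTranspose_apply, hBsymm i j]
    · intro x
      have := hB x
      simpa [dotProduct, Matrix.mulVec, Finset.mul_sum, mul_comm, mul_assoc,
        mul_left_comm] using this
  have hC0 : ∃ C : Matrix (Fin m) (Fin m) ℝ, C.IsHermitian ∧ C * C = Matrix.of B := by
    open MatrixOrder in
    exact ⟨CFC.sqrt (Matrix.of B), IsSelfAdjoint.of_nonneg (CFC.sqrt_nonneg _),
      CFC.sqrt_mul_sqrt_self _ hM.nonneg⟩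
  obtain ⟨C, hCh, hCC⟩ := hC0
  have hCsymm : ∀ i j, C i j = C j i := by
    intro i j
    have h := hCh
    have := congrFun (congrFun h j) i
    rw [Matrix.conjTranspose_apply] at this
    simpa using this
  have hC : ∀ i j, B i j = ∑ k, C i k * C k j := by
    intro i j
    have h := hCC
    have := congrFun (congrFun h i) j
    rw [Matrix.mul_apply] at this
    exact this.symm
  have key : ∀ i j, v i * v j * (A i j * B i j)
      = ∑ k, (v i * C i k) * (v j * C j k) * A i j := by
    intro i j
    rw [hC i j, Finset.mul_sum, Finset.mul_sum]
    refine Finset.sum_congr rfl fun k _ => ?_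
    rw [hCsymm k j]
    ring
  simp_rw [key]
  have h1 : ∑ i, ∑ j, ∑ k, (v i * C i k) * (v j * C j k) * A i j
      = ∑ i, ∑ k, ∑ j, (v i * C i k) * (v j * C j k) * A i j := by
    refine Finset.sum_congr rfl fun i _ => ?_
    exact Finset.sum_comm
  rw [h1, Finset.sum_comm]
  exact Finset.sum_nonneg fun k _ => hA fun i => v i * C i k

/-- Hadamard powers of a PSD kernel are PSD. -/
lemma pow_sum {m : ℕ} {A : Fin m → Fin m → ℝ}
    (hsymm : ∀ i j, A i j = A j i)
    (hA : ∀ v : Fin m → ℝ, 0 ≤ ∑ i, ∑ j, v i * v j * A i j) :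
    ∀ (k : ℕ) (v : Fin m → ℝ), 0 ≤ ∑ i, ∑ j, v i * v j * (A i j) ^ k := by
  intro k
  induction k with
  | zero =>
    intro v
    have : ∑ i, ∑ j, v i * v j * (A i j) ^ 0 = (∑ i, v i) * (∑ j, v j) := by
      rw [Finset.sum_mul_sum]
      simp
    rw [this]
    exact mul_self_nonneg _
  | succ k ih =>
    intro v
    have : ∀ i j : Fin m, v i * v j * (A i j) ^ (k+1) = v i * v j * ((A i j) ^ k * A i j) := by
      intro i j; ring
    simp_rw [this]
    exact schur_sum hsymm (fun w => ih w) hA v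

/-- The entrywise exponential of a symmetric PSD kernel is PSD. -/
lemma exp_sum {m : ℕ} {A : Fin m → Fin m → ℝ}
    (hsymm : ∀ i j, A i j = A j i)
    (hA : ∀ v : Fin m → ℝ, 0 ≤ ∑ i, ∑ j, v i * v j * A i j)
    (v : Fin m → ℝ) :
    0 ≤ ∑ i, ∑ j, v i * v j * Real.exp (A i j) := by
  have hsumm : ∀ (c x : ℝ), Summable (fun k : ℕ => c * (x ^ k / k.factorial)) :=
    fun c x => (Real.summable_pow_div_factorial x).mul_left c
  have hexp : ∀ x : ℝ, Real.exp x = ∑' k : ℕ, x ^ k / k.factorial := by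
    intro x
    rw [Real.exp_eq_exp_ℝ, NormedSpace.exp_eq_tsum_div]
  have key : ∀ i j : Fin m, v i * v j * Real.exp (A i j)
      = ∑' k : ℕ, v i * v j * ((A i j) ^ k / k.factorial) := by
    intro i j
    rw [hexp, ← tsum_mul_left]
  simp_rw [key]
  have step1 : ∀ i : Fin m, ∑ j, ∑' k : ℕ, v i * v j * ((A i j) ^ k / k.factorial)
      = ∑' k : ℕ, ∑ j, v i * v j * ((A i j) ^ k / k.factorial) := by
    intro i
    exact (Summable.tsum_finsetSum fun j _ => hsumm _ _).symm
  simp_rw [step1]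
  rw [(Summable.tsum_finsetSum fun i _ => summable_sum fun j _ => hsumm _ _).symm]
  refine tsum_nonneg fun k => ?_
  have : ∑ i, ∑ j, v i * v j * ((A i j) ^ k / k.factorial)
      = (∑ i, ∑ j, v i * v j * (A i j) ^ k) / k.factorial := by
    rw [Finset.sum_div]
    refine Finset.sum_congr rfl fun i _ => ?_
    rw [Finset.sum_div]
    refine Finset.sum_congr rfl fun j _ => ?_
    ring
  rw [this]
  exact div_nonneg (pow_sum hsymm hA k v) (Nat.cast_nonneg _)


lemma psd_phi {E : Type*} [AddCommGroup E] {γ : E → ℝ} (hγ : IsCondNegDefFun γ)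
    {m : ℕ} (x : Fin m → E) (v : Fin m → ℝ) :
    0 ≤ ∑ i, ∑ j, v i * v j * (γ (x i) + γ (x j) - γ (x i - x j)) := by
  obtain ⟨h0, hsym, hcnd⟩ := hγ
  set S := ∑ i, v i with hS
  set T := ∑ i, v i * γ (x i) with hT
  set U := ∑ i, ∑ j, v i * v j * γ (x i - x j) with hU
  have h := hcnd (m+1) (Fin.cons 0 x) (Fin.cons (-S) v) (by rw [Fin.sum_cons, ← hS]; ring_nf)
  have hexp : ∑ i : Fin (m+1), ∑ j : Fin (m+1),
      (Fin.cons (-S) v : Fin (m+1) → ℝ) i * (Fin.cons (-S) v : Fin (m+1) → ℝ) j *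
        γ ((Fin.cons 0 x : Fin (m+1) → E) i - (Fin.cons 0 x : Fin (m+1) → E) j)
      = -S * T - S * T + U := by
    rw [Fin.sum_univ_succ]
    simp only [Fin.cons_zero, Fin.cons_succ, sub_self, h0, mul_zero, zero_sub, sub_zero, hsym]
    rw [Fin.sum_univ_succ]
    simp only [Fin.cons_zero, Fin.cons_succ, sub_self, h0, mul_zero, zero_add]
    have inner : ∀ i : Fin m, (∑ j : Fin (m+1),
        v i * (Fin.cons (-S) v : Fin (m+1) → ℝ) j *
          γ (x i - (Fin.cons 0 x : Fin (m+1) → E) j))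
        = v i * (-S) * γ (x i) + ∑ j, v i * v j * γ (x i - x j) := by
      intro i
      rw [Fin.sum_univ_succ]
      simp only [Fin.cons_zero, Fin.cons_succ, sub_zero]
    rw [Finset.sum_congr rfl fun i _ => inner i, Finset.sum_add_distrib]
    have e1 : ∑ j : Fin m, -S * v j * γ (x j) = -S * T := by
      rw [hT, Finset.mul_sum]
      exact Finset.sum_congr rfl fun j _ => by ring
    have e2 : ∑ i : Fin m, v i * (-S) * γ (x i) = -S * T := by
      rw [hT, Finset.mul_sum]
      exact Finset.sum_congr rfl fun j _ => by ring
    rw [e1, e2, ← hU]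
    ring
  rw [hexp] at h
  have target : ∑ i, ∑ j, v i * v j * (γ (x i) + γ (x j) - γ (x i - x j))
      = S * T + S * T - U := by
    have step : ∀ i : Fin m, ∑ j, v i * v j * (γ (x i) + γ (x j) - γ (x i - x j))
        = v i * γ (x i) * S + v i * T - ∑ j, v i * v j * γ (x i - x j) := by
      intro i
      have e : ∀ j : Fin m, v i * v j * (γ (x i) + γ (x j) - γ (x i - x j))
          = v i * γ (x i) * v j + v i * (v j * γ (x j)) - v i * v j * γ (x i - x j) :=
        fun j => by ring
      simp_rw [e]
      rw [Finset.sum_sub_distrib, Finset.sum_add_distrib, ← Finset.mul_sum, ← Finset.mul_sum,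
        ← hS, ← hT]
    rw [Finset.sum_congr rfl fun i _ => step i, Finset.sum_sub_distrib, Finset.sum_add_distrib,
      ← Finset.sum_mul, ← Finset.sum_mul, ← hS, ← hT, ← hU]
    ring
  rw [target]
  linarith

/-- Schoenberg: `exp (-t γ)` is a positive definite kernel for `t ≥ 0`. -/
lemma schoenberg_s4 {E : Type*} [AddCommGroup E] {γ : E → ℝ} (hγ : IsCondNegDefFun γ)
    {m : ℕ} (x : Fin m → E) (lam : Fin m → ℝ) {t : ℝ} (ht : 0 ≤ t) :
    0 ≤ ∑ i, ∑ j, lam i * lam j * Real.exp (-(t * γ (x i - x j))) := by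
  have hsymγ : ∀ i j, γ (x j - x i) = γ (x i - x j) := by
    intro i j
    rw [← neg_sub, hγ.2.1]
  set A : Fin m → Fin m → ℝ := fun i j => t * (γ (x i) + γ (x j) - γ (x i - x j)) with hA
  have hAsymm : ∀ i j, A i j = A j i := by
    intro i j
    simp only [hA]
    rw [hsymγ]
    ring
  have hApsd : ∀ v : Fin m → ℝ, 0 ≤ ∑ i, ∑ j, v i * v j * A i j := by
    intro v
    have : ∑ i, ∑ j, v i * v j * A i j
        = t * ∑ i, ∑ j, v i * v j * (γ (x i) + γ (x j) - γ (x i - x j)) := by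
      rw [Finset.mul_sum]
      refine Finset.sum_congr rfl fun i _ => ?_
      rw [Finset.mul_sum]
      exact Finset.sum_congr rfl fun j _ => by simp only [hA]; ring
    rw [this]
    exact mul_nonneg ht (psd_phi hγ x v)
  have key := exp_sum hAsymm hApsd (fun i => lam i * Real.exp (-(t * γ (x i))))
  have eq : ∀ i j : Fin m,
      (lam i * Real.exp (-(t * γ (x i)))) * (lam j * Real.exp (-(t * γ (x j)))) * Real.exp (A i j)
      = lam i * lam j * Real.exp (-(t * γ (x i - x j))) := by
    intro i j
    have e : Real.exp (-(t * γ (x i))) * Real.exp (-(t * γ (x j))) * Real.exp (A i j)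
        = Real.exp (-(t * γ (x i - x j))) := by
      rw [← Real.exp_add, ← Real.exp_add]
      congr 1
      simp only [hA]
      ring
    calc lam i * Real.exp (-(t * γ (x i))) * (lam j * Real.exp (-(t * γ (x j)))) * Real.exp (A i j)
        = lam i * lam j * (Real.exp (-(t * γ (x i))) * Real.exp (-(t * γ (x j))) * Real.exp (A i j)) := by
          ring
    _ = lam i * lam j * Real.exp (-(t * γ (x i - x j))) := by rw [e]
  calc (0:ℝ) ≤ _ := key
  _ = ∑ i, ∑ j, lam i * lam j * Real.exp (-(t * γ (x i - x j))) := by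
      exact Finset.sum_congr rfl fun i _ => Finset.sum_congr rfl fun j _ => eq i j


lemma bern_bound {s l M : ℝ} (hs : 0 < s) (hl : 0 ≤ l) (hlM : l ≤ M) :
    |1 - Real.exp (-(s * l))| ≤ 2 * (1 + M) * (s / (1 + s)) := by
  have hM : 0 ≤ M := le_trans hl hlM
  have h1 : Real.exp (-(s * l)) ≤ 1 := by
    rw [Real.exp_le_one_iff]
    nlinarith
  have hpos := Real.exp_pos (-(s * l))
  rw [abs_of_nonneg (by linarith)]
  have hbound2 : 1 - Real.exp (-(s * l)) ≤ s * l := by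
    have := Real.add_one_le_exp (-(s * l))
    linarith
  have hs1 : (0:ℝ) < 1 + s := by linarith
  rw [← mul_div_assoc, le_div_iff₀ hs1]
  rcases le_total s 1 with h | h
  · have hsl : s * l ≤ s * M := mul_le_mul_of_nonneg_left hlM hs.le
    nlinarith
  · nlinarith

lemma g_integrable (μ : Measure ℝ)
    (hμ : (∫⁻ s in Set.Ioi (0 : ℝ), ENNReal.ofReal (s / (1 + s)) ∂μ) < ⊤) :
    Integrable (fun s => s / (1 + s)) (μ.restrict (Set.Ioi 0)) := by
  constructor
  · exact (measurable_id.div (measurable_const.add measurable_id)).aestronglyMeasurable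
  · have hae : 0 ≤ᵐ[μ.restrict (Set.Ioi 0)] fun s => s / (1 + s) := by
      filter_upwards [ae_restrict_mem measurableSet_Ioi] with s hs
      have : (0:ℝ) < s := hs
      positivity
    rw [hasFiniteIntegral_iff_ofReal hae]
    exact hμ

lemma F_continuous (l : ℝ) : Continuous (fun s : ℝ => 1 - Real.exp (-(s * l))) :=
  continuous_const.sub (Real.continuous_exp.comp (continuous_id.mul continuous_const).neg)

lemma F_integrable (μ : Measure ℝ)
    (hμ : (∫⁻ s in Set.Ioi (0 : ℝ), ENNReal.ofReal (s / (1 + s)) ∂μ) < ⊤)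
    {l : ℝ} (hl : 0 ≤ l) :
    Integrable (fun s => 1 - Real.exp (-(s * l))) (μ.restrict (Set.Ioi 0)) := by
  refine Integrable.mono ((g_integrable μ hμ).const_mul (2 * (1 + l)))
    (F_continuous l).aestronglyMeasurable ?_
  filter_upwards [ae_restrict_mem measurableSet_Ioi] with s hs
  rw [Real.norm_eq_abs, Real.norm_eq_abs]
  exact le_trans (bern_bound hs hl le_rfl) (le_abs_self _)


/-- If `γ : ℝ^n → ℝ` is a continuous, nonnegative, conditionally negative definite function
and `f` is a Bernstein function, then `f ∘ γ` is a continuous conditionally negative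
definite function. -/
theorem bernstein_comp_variogram (n : ℕ) (γ : EuclideanSpace ℝ (Fin n) → ℝ)
    (hγc : Continuous γ) (hγ : IsCondNegDefFun γ) (hγ0 : ∀ η, 0 ≤ γ η)
    (f : ℝ → ℝ) (hf : IsBernstein f) :
    Continuous (fun η => f (γ η)) ∧ IsCondNegDefFun (fun η => f (γ η)) := by
  obtain ⟨b, μ, hb, hμ, hfl⟩ := hf
  have hFrep : (fun η => f (γ η))
      = fun η => b * γ η + ∫ s in Set.Ioi (0:ℝ), (1 - Real.exp (-(s * γ η))) ∂μ :=
    funext fun η => hfl (γ η) (hγ0 η)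
  constructor
  · rw [hFrep]
    refine Continuous.add (continuous_const.mul hγc) ?_
    refine continuous_iff_continuousAt.mpr fun η₀ => ?_
    apply continuousAt_of_dominated (bound := fun s => 2 * (1 + (γ η₀ + 1)) * (s / (1 + s)))
    · exact Filter.Eventually.of_forall fun η => (F_continuous (γ η)).aestronglyMeasurable
    · have hnhds : ∀ᶠ η in nhds η₀, γ η < γ η₀ + 1 :=
        (hγc.tendsto η₀).eventually (eventually_lt_nhds (lt_add_one (γ η₀)))
      filter_upwards [hnhds] with η hη
      filter_upwards [ae_restrict_mem measurableSet_Ioi] with s hs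
      rw [Real.norm_eq_abs]
      exact bern_bound hs (hγ0 η) hη.le
    · exact (g_integrable μ hμ).const_mul _
    · refine Filter.Eventually.of_forall fun s => Continuous.continuousAt ?_
      exact continuous_const.sub (Real.continuous_exp.comp (continuous_const.mul hγc).neg)
  · refine ⟨?_, ?_, ?_⟩
    · show f (γ 0) = 0
      rw [hγ.1, hfl 0 le_rfl]
      simp
    · intro η
      show f (γ (-η)) = f (γ η)
      rw [hγ.2.1]
    · intro m x lam hsum
      have hrw : ∀ i j : Fin m, lam i * lam j * f (γ (x i - x j))
          = b * (lam i * lam j * γ (x i - x j))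
            + ∫ s in Set.Ioi (0:ℝ), lam i * lam j * (1 - Real.exp (-(s * γ (x i - x j)))) ∂μ := by
        intro i j
        rw [hfl _ (hγ0 _), MeasureTheory.integral_const_mul]
        ring
      simp_rw [hrw]
      rw [Finset.sum_congr rfl fun i (_ : i ∈ Finset.univ) => Finset.sum_add_distrib,
        Finset.sum_add_distrib]
      have part1 : ∑ i, ∑ j, b * (lam i * lam j * γ (x i - x j)) ≤ 0 := by
        have h := hγ.2.2 m x lam hsum
        have e : ∑ i, ∑ j, b * (lam i * lam j * γ (x i - x j))
            = b * ∑ i, ∑ j, lam i * lam j * γ (x i - x j) := by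
          rw [Finset.mul_sum]
          exact Finset.sum_congr rfl fun i _ => (Finset.mul_sum _ _ _).symm
        rw [e]
        have := mul_le_mul_of_nonneg_left h hb
        simpa using this
      have hint : ∀ i j : Fin m,
          Integrable (fun s => lam i * lam j * (1 - Real.exp (-(s * γ (x i - x j)))))
            (μ.restrict (Set.Ioi 0)) :=
        fun i j => (F_integrable μ hμ (hγ0 _)).const_mul _
      have part2 : ∑ i, ∑ j,
          (∫ s in Set.Ioi (0:ℝ), lam i * lam j * (1 - Real.exp (-(s * γ (x i - x j)))) ∂μ) ≤ 0 := by
        have e1 : ∀ i : Fin m,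
            ∑ j, (∫ s in Set.Ioi (0:ℝ), lam i * lam j * (1 - Real.exp (-(s * γ (x i - x j)))) ∂μ)
            = ∫ s in Set.Ioi (0:ℝ),
                (∑ j, lam i * lam j * (1 - Real.exp (-(s * γ (x i - x j))))) ∂μ :=
          fun i => (integral_finset_sum _ fun j _ => hint i j).symm
        rw [Finset.sum_congr rfl fun i (_ : i ∈ Finset.univ) => e1 i,
          ← integral_finset_sum _ fun i _ => integrable_finset_sum _ fun j _ => hint i j]
        apply integral_nonpos_of_ae
        filter_upwards [ae_restrict_mem measurableSet_Ioi] with s hs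
        have hsch := schoenberg_s4 hγ x lam (le_of_lt hs)
        have hzero : ∑ i, ∑ j, lam i * lam j = (0:ℝ) := by
          rw [← Finset.sum_mul_sum, hsum, zero_mul]
        have expand : ∑ i, ∑ j, lam i * lam j * (1 - Real.exp (-(s * γ (x i - x j))))
            = (∑ i, ∑ j, lam i * lam j)
              - ∑ i, ∑ j, lam i * lam j * Real.exp (-(s * γ (x i - x j))) := by
          simp_rw [mul_sub, mul_one, Finset.sum_sub_distrib]
        rw [expand, hzero]
        simp only [Pi.zero_apply]
        linarith
      linarith
end

section
/- Let γ : ℝ^n → ℝ be a conditionally negative definite function with γ ≥ 0. Then the square root of γ is subadditive: for all η, ξ ∈ ℝ^n, √(γ(η + ξ)) ≤ √(γ(η)) + √(γ(ξ)). -/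
lemma cndf_key {E : Type*} [AddCommGroup E] (γ : E → ℝ) (hγ : IsCondNegDefFun γ)
    (η ξ : E) (t s : ℝ) :
    t * s * γ (η + ξ) ≤ t * (t + s) * γ η + s * (t + s) * γ ξ := by
  obtain ⟨h0, hsymm, hcnd⟩ := hγ
  have key := hcnd 3 ![0, η, η + ξ] ![t, -(t + s), s] (by
    simp [Fin.sum_univ_three])
  simp only [Fin.sum_univ_three, Matrix.cons_val_zero, Matrix.cons_val_one,
    Matrix.head_cons, Matrix.cons_val_two, Matrix.tail_cons] at key
  have e1 : (0 : E) - η = -η := by abel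
  have e2 : (0 : E) - (η + ξ) = -(η + ξ) := by abel
  have e3 : η - 0 = η := by abel
  have e4 : η - (η + ξ) = -ξ := by abel
  have e5 : η + ξ - 0 = η + ξ := by abel
  have e6 : η + ξ - η = ξ := by abel
  have e7 : η - η = (0 : E) := by abel
  have e8 : (0 : E) - 0 = 0 := by abel
  have e9 : η + ξ - (η + ξ) = (0 : E) := by abel
  rw [e1, e2, e3, e4, e5, e6, e7, e8, e9, h0, hsymm η, hsymm (η + ξ), hsymm ξ] at key
  nlinarith [key]

/-- If `γ : ℝ^n → ℝ` is a nonnegative conditionally negative definite function, then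
`√γ` is subadditive: `√(γ(η + ξ)) ≤ √(γ η) + √(γ ξ)` for all `η, ξ`. -/
theorem variogram_sqrt_subadditive (n : ℕ) (γ : EuclideanSpace ℝ (Fin n) → ℝ)
    (hγ : IsCondNegDefFun γ) (hγ0 : ∀ η, 0 ≤ γ η) :
    ∀ η ξ : EuclideanSpace ℝ (Fin n),
      Real.sqrt (γ (η + ξ)) ≤ Real.sqrt (γ η) + Real.sqrt (γ ξ) := by
  intro η ξ
  set a := γ η with ha
  set b := γ ξ with hb
  set c := γ (η + ξ) with hc
  have hA : 0 ≤ a := hγ0 η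
  have hB : 0 ≤ b := hγ0 ξ
  have hC : 0 ≤ c := hγ0 (η + ξ)
  have key : ∀ t s : ℝ, t * s * c ≤ t * (t + s) * a + s * (t + s) * b :=
    fun t s => cndf_key γ hγ η ξ t s
  have sa := Real.sq_sqrt hA
  have sb := Real.sq_sqrt hB
  have na := Real.sqrt_nonneg a
  have nb := Real.sqrt_nonneg b
  -- main claim: c ≤ (√a + √b)^2
  have main : c ≤ (Real.sqrt a + Real.sqrt b) ^ 2 := by
    rcases eq_or_lt_of_le hA with hA0 | hA0
    · -- a = 0 : show c ≤ b
      have hcb : c ≤ b := by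
        rcases eq_or_lt_of_le hB with hB0 | hB0
        · -- b = 0 too: c ≤ 0
          have := key 1 1
          rw [← hA0, ← hB0] at this
          linarith
        · refine le_of_forall_pos_le_add fun ε hε => ?_
          have := key 1 (ε / b)
          rw [← hA0] at this
          have hsb : (ε / b) * b = ε := div_mul_cancel₀ ε (ne_of_gt hB0)
          have hs : 0 < ε / b := div_pos hε hB0
          nlinarith
      calc c ≤ b := hcb
        _ = Real.sqrt b ^ 2 := sb.symm
        _ ≤ (Real.sqrt a + Real.sqrt b) ^ 2 := by nlinarith
    · rcases eq_or_lt_of_le hB with hB0 | hB0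
      · -- b = 0 : show c ≤ a
        have hca : c ≤ a := by
          refine le_of_forall_pos_le_add fun ε hε => ?_
          have := key (ε / a) 1
          rw [← hB0] at this
          have hsa : (ε / a) * a = ε := div_mul_cancel₀ ε (ne_of_gt hA0)
          have hs : 0 < ε / a := div_pos hε hA0
          nlinarith
        calc c ≤ a := hca
          _ = Real.sqrt a ^ 2 := sa.symm
          _ ≤ (Real.sqrt a + Real.sqrt b) ^ 2 := by nlinarith
      · -- a, b > 0
        have hsa : 0 < Real.sqrt a := Real.sqrt_pos.mpr hA0
        have hsb : 0 < Real.sqrt b := Real.sqrt_pos.mpr hB0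
        have := key (Real.sqrt b) (Real.sqrt a)
        nlinarith [mul_pos hsb hsa]
  calc Real.sqrt c ≤ Real.sqrt ((Real.sqrt a + Real.sqrt b) ^ 2) :=
        Real.sqrt_le_sqrt main
    _ = Real.sqrt a + Real.sqrt b := Real.sqrt_sq (by positivity)
end

section
/- Let d ≥ 1. The mixed-term function c : ℝ^d × ℝ → ℝ defined by c(η, τ) = ‖η‖ · |τ|, where ‖·‖ is the Euclidean norm on ℝ^d, is not conditionally negative definite on ℝ^d × ℝ. -/
/-- For `d ≥ 1`, the mixed-term function `c(η, τ) = ‖η‖ · |τ|` on `ℝ^d × ℝ` (with the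
Euclidean norm on `ℝ^d`) is not conditionally negative definite. -/
theorem mixed_term_not_variogram (d : ℕ) (hd : 1 ≤ d) :
    ¬ IsCondNegDefFun (fun p : EuclideanSpace ℝ (Fin d) × ℝ => ‖p.1‖ * |p.2|) := by
  rintro ⟨-, -, h⟩
  set e : EuclideanSpace ℝ (Fin d) := EuclideanSpace.single ⟨0, hd⟩ 1 with he
  have hne : ‖e‖ = 1 := by simp [he, EuclideanSpace.norm_single]
  have := h 4 ![(0, 0), (e, 1), (e, 0), (0, 1)] ![1, 1, -1, -1]
    (by simp [Fin.sum_univ_four])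
  simp only [Fin.sum_univ_four, Matrix.cons_val_zero, Matrix.cons_val_one, Matrix.head_cons,
    Matrix.cons_val_two, Matrix.tail_cons, Matrix.cons_val_three, Prod.mk_sub_mk,
    sub_self, sub_zero, zero_sub, norm_neg, norm_zero, hne] at this
  norm_num at this
end

section
/- Let d ≥ 1. The function γ : ℝ^d × ℝ → ℝ defined by γ(η, τ) = (‖η‖ + |τ|)², where ‖·‖ is the Euclidean norm on ℝ^d, is not conditionally negative definite on ℝ^d × ℝ. -/
/-- For `d ≥ 1`, the function `γ(η, τ) = (‖η‖ + |τ|)²` on `ℝ^d × ℝ` (with the Euclidean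
norm on `ℝ^d`) is not conditionally negative definite. -/
theorem brc_square_not_variogram (d : ℕ) (hd : 1 ≤ d) :
    ¬ IsCondNegDefFun (fun p : EuclideanSpace ℝ (Fin d) × ℝ => (‖p.1‖ + |p.2|) ^ 2) := by
  rintro ⟨h0, hsym, hq⟩
  set e : EuclideanSpace ℝ (Fin d) := EuclideanSpace.single ⟨0, hd⟩ 1 with he
  have hne : ‖e‖ = 1 := by simp [he, EuclideanSpace.norm_single]
  have key := hq 4 ![(e, 1), (0, 0), (e, 0), ((0 : EuclideanSpace ℝ (Fin d)), 1)]
    ![1, 1, -1, -1] (by norm_num [Fin.sum_univ_four, Matrix.cons_val_two, Matrix.cons_val_three, Matrix.tail_cons, Matrix.head_cons])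
  simp only [Fin.sum_univ_four, Matrix.cons_val_zero, Matrix.cons_val_one, Matrix.head_cons,
    Matrix.cons_val_two, Matrix.tail_cons, Matrix.cons_val_three, Prod.mk_sub_mk] at key
  rw [show (1:ℝ) - 1 = 0 by ring, show (1:ℝ) - 0 = 1 by ring, show (0:ℝ) - 1 = -1 by ring,
    show (0:ℝ) - 0 = 0 by ring] at key
  simp only [sub_self, sub_zero, zero_sub, norm_neg, norm_zero, hne, abs_zero, abs_one,
    abs_neg] at key
  norm_num at key
end

section
/- (Schoenberg's correspondence.) Let γ : ℝ^n → ℝ satisfy γ(0) = 0 and γ(−η) = γ(η) for all η. Then the function η ↦ exp(−t γ(η)) is positive definite on ℝ^n for every t > 0 if and only if γ is conditionally negative definite. -/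
open Finset


/-- Gram kernels on `Fin m`. -/
def IsGramKer {m : ℕ} (K : Fin m → Fin m → ℝ) : Prop :=
  ∃ (ι : Type) (_ : Fintype ι) (B : ι → Fin m → ℝ), ∀ i j, K i j = ∑ a, B a i * B a j

theorem IsGramKer.quad_nonneg {m : ℕ} {K : Fin m → Fin m → ℝ} (hK : IsGramKer K)
    (lam : Fin m → ℝ) : 0 ≤ ∑ i, ∑ j, lam i * lam j * K i j := by
  obtain ⟨ι, _, B, hB⟩ := hK
  have step : ∑ i, ∑ j, lam i * lam j * K i j
      = ∑ a, (∑ i, lam i * B a i) ^ 2 := by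
    calc ∑ i, ∑ j, lam i * lam j * K i j
        = ∑ i, ∑ j, ∑ a, (lam i * B a i) * (lam j * B a j) := by
          refine Finset.sum_congr rfl fun i _ => Finset.sum_congr rfl fun j _ => ?_
          rw [hB, Finset.mul_sum]
          exact Finset.sum_congr rfl fun a _ => by ring
      _ = ∑ i, ∑ a, ∑ j, (lam i * B a i) * (lam j * B a j) := by
          exact Finset.sum_congr rfl fun i _ => Finset.sum_comm
      _ = ∑ a, ∑ i, ∑ j, (lam i * B a i) * (lam j * B a j) := Finset.sum_comm
      _ = ∑ a, (∑ i, lam i * B a i) ^ 2 := by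
          refine Finset.sum_congr rfl fun a _ => ?_
          rw [sq, Finset.sum_mul_sum]
  rw [step]
  exact Finset.sum_nonneg fun a _ => sq_nonneg _

theorem IsGramKer.mul {m : ℕ} {K L : Fin m → Fin m → ℝ} (hK : IsGramKer K) (hL : IsGramKer L) :
    IsGramKer (fun i j => K i j * L i j) := by
  obtain ⟨ι, _, B, hB⟩ := hK
  obtain ⟨κ, _, C, hC⟩ := hL
  refine ⟨ι × κ, inferInstance, fun p i => B p.1 i * C p.2 i, fun i j => ?_⟩
  show K i j * L i j = ∑ a : ι × κ, (B a.1 i * C a.2 i) * (B a.1 j * C a.2 j)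
  rw [hB, hC, Fintype.sum_prod_type, Finset.sum_mul_sum]
  exact Finset.sum_congr rfl fun a _ => Finset.sum_congr rfl fun b _ => by ring

theorem IsGramKer.one {m : ℕ} : IsGramKer (fun _ _ : Fin m => (1 : ℝ)) :=
  ⟨Unit, inferInstance, fun _ _ => 1, fun i j => by simp⟩

theorem IsGramKer.pow {m : ℕ} {K : Fin m → Fin m → ℝ} (hK : IsGramKer K) (k : ℕ) :
    IsGramKer (fun i j => K i j ^ k) := by
  induction k with
  | zero => simpa using IsGramKer.one
  | succ k ih => simpa [pow_succ] using ih.mul hK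

theorem IsGramKer.const_mul {m : ℕ} {K : Fin m → Fin m → ℝ} (hK : IsGramKer K) {c : ℝ}
    (hc : 0 ≤ c) : IsGramKer (fun i j => c * K i j) := by
  obtain ⟨ι, _, B, hB⟩ := hK
  refine ⟨ι, inferInstance, fun a i => Real.sqrt c * B a i, fun i j => ?_⟩
  show c * K i j = ∑ a, (Real.sqrt c * B a i) * (Real.sqrt c * B a j)
  rw [hB, Finset.mul_sum]
  exact Finset.sum_congr rfl fun a _ => by
    rw [show Real.sqrt c * B a i * (Real.sqrt c * B a j)
        = (Real.sqrt c * Real.sqrt c) * (B a i * B a j) by ring, Real.mul_self_sqrt hc]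

theorem isGramKer_of_quad {m : ℕ} {K : Fin m → Fin m → ℝ}
    (hsym : ∀ i j, K j i = K i j)
    (h : ∀ v : Fin m → ℝ, 0 ≤ ∑ i, ∑ j, v i * v j * K i j) : IsGramKer K := by
  have hps : Matrix.PosSemidef (Matrix.of K) := by
    refine Matrix.posSemidef_iff_dotProduct_mulVec.mpr ⟨?_, ?_⟩
    · ext i j
      simp [Matrix.conjTranspose_apply, hsym i j]
    · intro v
      have := h v
      simpa [dotProduct, Matrix.mulVec, Finset.mul_sum, mul_assoc, mul_comm,
        mul_left_comm] using this
  obtain ⟨B, hB⟩ : ∃ B : Matrix (Fin m) (Fin m) ℝ, Matrix.of K = star B * B := by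
    open scoped MatrixOrder in
    have h0 : 0 ≤ Matrix.of K := Matrix.nonneg_iff_posSemidef.mpr hps
    open scoped MatrixOrder in
    exact ⟨CFC.sqrt (Matrix.of K), by
      rw [(CFC.sqrt_nonneg (Matrix.of K)).isSelfAdjoint.star_eq, CFC.sqrt_mul_sqrt_self _ h0]⟩
  refine ⟨Fin m, inferInstance, fun a i => B a i, fun i j => ?_⟩
  have := congrArg (fun M => M i j) hB
  simpa [Matrix.mul_apply, Matrix.conjTranspose_apply] using this

theorem exp_gram_quad_nonneg {m : ℕ} {M : Fin m → Fin m → ℝ} (hM : IsGramKer M)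
    (mu : Fin m → ℝ) : 0 ≤ ∑ i, ∑ j, mu i * mu j * Real.exp (M i j) := by
  have hexp : ∀ x : ℝ, Real.exp x = ∑' k : ℕ, x ^ k / (Nat.factorial k : ℝ) := fun x => by
    rw [Real.exp_eq_exp_ℝ, NormedSpace.exp_eq_tsum_div]
  have hsummable : ∀ i j, Summable
      (fun k : ℕ => mu i * mu j * (M i j ^ k / (Nat.factorial k : ℝ))) := fun i j =>
    (Real.summable_pow_div_factorial (M i j)).mul_left _
  have key : ∑ i, ∑ j, mu i * mu j * Real.exp (M i j)
      = ∑' k : ℕ, ∑ i, ∑ j, mu i * mu j * (M i j ^ k / (Nat.factorial k : ℝ)) := by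
    simp_rw [hexp, ← tsum_mul_left]
    rw [show (∑ i, ∑ j, ∑' (k : ℕ), mu i * mu j * (M i j ^ k / (Nat.factorial k : ℝ)))
        = ∑ i, ∑' (k : ℕ), ∑ j, mu i * mu j * (M i j ^ k / (Nat.factorial k : ℝ)) from
      Finset.sum_congr rfl fun i _ => (Summable.tsum_finsetSum (fun j _ => hsummable i j)).symm]
    exact (Summable.tsum_finsetSum (fun i _ => summable_sum fun j _ => hsummable i j)).symm
  rw [key]
  refine tsum_nonneg fun k => ?_
  have h1 : ∑ i, ∑ j, mu i * mu j * (M i j ^ k / (Nat.factorial k : ℝ))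
      = (∑ i, ∑ j, mu i * mu j * M i j ^ k) * ((Nat.factorial k : ℝ))⁻¹ := by
    rw [Finset.sum_mul]
    refine Finset.sum_congr rfl fun i _ => ?_
    rw [Finset.sum_mul]
    exact Finset.sum_congr rfl fun j _ => by rw [div_eq_mul_inv]; ring
  rw [h1]
  exact mul_nonneg ((hM.pow k).quad_nonneg mu) (by positivity)



/-- Schoenberg'"'"'s correspondence: for `γ : ℝ^n → ℝ` with `γ 0 = 0` and `γ (-η) = γ η`,
the function `η ↦ exp(−t γ η)` is positive definite for every `t > 0` if and only if
`γ` is conditionally negative definite. -/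
theorem schoenberg_correspondence (n : ℕ) (γ : EuclideanSpace ℝ (Fin n) → ℝ)
    (h0 : γ 0 = 0) (hsymm : ∀ η, γ (-η) = γ η) :
    (∀ t : ℝ, 0 < t → IsPosDefFun (fun η => Real.exp (-(t * γ η)))) ↔
      IsCondNegDefFun γ := by
  constructor
  · -- forward: pos def for all t > 0 implies conditionally negative definite
    intro hpd
    refine ⟨h0, hsymm, ?_⟩
    intro m x lam hsum
    set c : Fin m → Fin m → ℝ := fun i j => γ (x i - x j) with hc
    set S : ℝ := ∑ i, ∑ j, lam i * lam j * c i j with hS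
    -- the slope sum
    set G : ℝ → ℝ := fun t => ∑ i, ∑ j,
      lam i * lam j * slope (fun u => Real.exp (-(u * c i j))) 0 t with hG
    have hderiv : ∀ i j, HasDerivAt (fun u : ℝ => Real.exp (-(u * c i j))) (-(c i j)) 0 := by
      intro i j
      have h1 : HasDerivAt (fun u : ℝ => -(u * c i j)) (-(c i j)) 0 := by
        simpa using ((hasDerivAt_id (0:ℝ)).mul_const (c i j)).fun_neg
      simpa using h1.exp
    have htend : Filter.Tendsto G (nhdsWithin 0 (Set.Ioi 0)) (nhds (-S)) := by
      have hSneg : -S = ∑ i, ∑ j, lam i * lam j * (-(c i j)) := by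
        simp [hS, Finset.sum_neg_distrib, mul_neg]
      rw [hSneg]
      refine tendsto_finset_sum _ fun i _ => tendsto_finset_sum _ fun j _ => ?_
      refine Filter.Tendsto.const_mul _ ?_
      have := hasDerivAt_iff_tendsto_slope.mp (hderiv i j)
      exact this.mono_left (nhdsWithin_mono _ fun u hu => ne_of_gt hu)
    have hGnonneg : ∀ᶠ t in nhdsWithin 0 (Set.Ioi 0), 0 ≤ G t := by
      refine eventually_nhdsWithin_of_forall fun t ht => ?_
      have htpos : (0:ℝ) < t := ht
      have hFt : 0 ≤ ∑ i, ∑ j, lam i * lam j * Real.exp (-(t * c i j)) := hpd t htpos m x lam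
      have hzero : ∑ i, ∑ j, lam i * lam j = (0:ℝ) := by
        refine Finset.sum_eq_zero fun i _ => ?_
        rw [← Finset.mul_sum, hsum, mul_zero]
      have hGt : G t = (∑ i, ∑ j, lam i * lam j * Real.exp (-(t * c i j))) * t⁻¹ := by
        have step1 : G t = ∑ i, ∑ j,
            (lam i * lam j * Real.exp (-(t * c i j)) * t⁻¹ - lam i * lam j * t⁻¹) := by
          simp only [hG]
          refine Finset.sum_congr rfl fun i _ => Finset.sum_congr rfl fun j _ => ?_
          rw [slope_def_field]
          simp
          ring
        rw [step1]
        have step2 : ∑ i, ∑ j,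
            (lam i * lam j * Real.exp (-(t * c i j)) * t⁻¹ - lam i * lam j * t⁻¹)
            = (∑ i, ∑ j, lam i * lam j * Real.exp (-(t * c i j))) * t⁻¹
              - (∑ i, ∑ j, lam i * lam j) * t⁻¹ := by
          rw [Finset.sum_mul, Finset.sum_mul, ← Finset.sum_sub_distrib]
          refine Finset.sum_congr rfl fun i _ => ?_
          rw [Finset.sum_mul, Finset.sum_mul, ← Finset.sum_sub_distrib]
        rw [step2, hzero]
        ring
      rw [hGt]
      exact mul_nonneg hFt (inv_nonneg.mpr htpos.le)
    have h0S : 0 ≤ -S := ge_of_tendsto htend hGnonneg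
    linarith
  · -- backward: conditionally negative definite implies pos def for all t > 0
    rintro ⟨h0', hsym', hneg⟩ t ht m x lam
    have hKsym : ∀ i j : Fin m, (γ (x j) + γ (x i) - γ (x j - x i))
        = γ (x i) + γ (x j) - γ (x i - x j) := by
      intro i j
      rw [show x j - x i = -(x i - x j) by abel, hsymm]
      ring
    have hKquad : ∀ v : Fin m → ℝ,
        0 ≤ ∑ i, ∑ j, v i * v j * (γ (x i) + γ (x j) - γ (x i - x j)) := by
      intro v
      set s : ℝ := ∑ i, v i with hsdef
      have hE := hneg (m + 1) (Fin.cons 0 x) (Fin.cons (-s) v)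
        (by rw [Fin.sum_cons]; simp [hsdef])
      simp only [Fin.sum_univ_succ, Fin.cons_zero, Fin.cons_succ, sub_zero, zero_sub, hsymm,
        sub_self, h0, mul_zero, zero_mul, add_zero, zero_add, neg_mul, mul_neg, neg_neg] at hE
      set A : ℝ := ∑ i, v i * γ (x i) with hAdef
      set D : ℝ := ∑ i, ∑ j, v i * v j * γ (x i - x j) with hDdef
      have e1 : ∑ i, ∑ j, v i * v j * γ (x i) = A * s := by
        rw [hAdef, Finset.sum_mul]
        refine Finset.sum_congr rfl fun i _ => ?_
        rw [show v i * γ (x i) * s = v i * γ (x i) * ∑ j, v j from rfl, Finset.mul_sum]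
        exact Finset.sum_congr rfl fun j _ => by ring
      have e2 : ∑ i, ∑ j, v i * v j * γ (x j) = A * s := by
        rw [Finset.sum_comm, hAdef, Finset.sum_mul]
        refine Finset.sum_congr rfl fun j _ => ?_
        rw [show v j * γ (x j) * s = v j * γ (x j) * ∑ i, v i from rfl, Finset.mul_sum]
        exact Finset.sum_congr rfl fun i _ => by ring
      have hgoal : ∑ i, ∑ j, v i * v j * (γ (x i) + γ (x j) - γ (x i - x j))
          = (∑ i, ∑ j, v i * v j * γ (x i)) + (∑ i, ∑ j, v i * v j * γ (x j)) - D := by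
        rw [hDdef]
        simp only [mul_add, mul_sub, Finset.sum_add_distrib, Finset.sum_sub_distrib]
      rw [hgoal, e1, e2]
      have hE1 : ∑ i, -(s * v i * γ (x i)) = -(s * A) := by
        rw [hAdef, Finset.mul_sum, ← Finset.sum_neg_distrib]
        exact Finset.sum_congr rfl fun i _ => by ring
      have hE2 : ∑ i, (-(v i * s * γ (x i)) + ∑ j, v i * v j * γ (x i - x j))
          = -(s * A) + D := by
        rw [Finset.sum_add_distrib, ← hDdef]
        congr 1
        rw [hAdef, Finset.mul_sum, ← Finset.sum_neg_distrib]
        exact Finset.sum_congr rfl fun i _ => by ring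
      rw [hE1, hE2] at hE
      linarith
    have hKgram : IsGramKer (fun i j : Fin m => γ (x i) + γ (x j) - γ (x i - x j)) :=
      isGramKer_of_quad (fun i j => hKsym i j) hKquad
    have hM : IsGramKer (fun i j : Fin m => t * (γ (x i) + γ (x j) - γ (x i - x j))) :=
      hKgram.const_mul ht.le
    have hfin := exp_gram_quad_nonneg hM (fun i => lam i * Real.exp (-(t * γ (x i))))
    have heq : ∑ i, ∑ j, (lam i * Real.exp (-(t * γ (x i)))) * (lam j * Real.exp (-(t * γ (x j))))
          * Real.exp (t * (γ (x i) + γ (x j) - γ (x i - x j)))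
        = ∑ i, ∑ j, lam i * lam j * Real.exp (-(t * γ (x i - x j))) := by
      refine Finset.sum_congr rfl fun i _ => Finset.sum_congr rfl fun j _ => ?_
      rw [show -(t * γ (x i - x j)) = (-(t * γ (x i))) + ((-(t * γ (x j)))
        + t * (γ (x i) + γ (x j) - γ (x i - x j))) by ring, Real.exp_add, Real.exp_add]
      ring
    calc (0:ℝ) ≤ _ := hfin
      _ = _ := heq
end

section
/- (Schoenberg.) Let d ≥ 1 and α > 0. The stable function K : ℝ^d → ℝ defined by K(x) = exp(−‖x‖^α), where ‖·‖ is the Euclidean norm on ℝ^d, is positive definite if and only if α ≤ 2. -/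
open Real MeasureTheory Set Filter Topology

-- L1: inner power quadratic form nonneg
lemma inner_pow_quad {d n : ℕ} (x : Fin n → EuclideanSpace ℝ (Fin d)) (m : ℕ) :
    ∀ ν : Fin n → ℝ, 0 ≤ ∑ i, ∑ j, ν i * ν j * (inner ℝ (x i) (x j) : ℝ) ^ m := by
  induction m with
  | zero =>
    intro ν
    have h : ∑ i, ∑ j, ν i * ν j * (inner ℝ (x i) (x j) : ℝ) ^ 0
        = (∑ i, ν i) * (∑ j, ν j) := by
      rw [Finset.sum_mul_sum]
      simp
    rw [h]
    exact mul_self_nonneg _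
  | succ m ih =>
    intro ν
    have hin : ∀ i j, (inner ℝ (x i) (x j) : ℝ) = ∑ k, x i k * x j k := by
      intro i j
      simp [PiLp.inner_apply]
      exact Finset.sum_congr rfl fun k _ => mul_comm _ _
    have key : ∑ i, ∑ j, ν i * ν j * (inner ℝ (x i) (x j) : ℝ) ^ (m+1)
        = ∑ k, ∑ i, ∑ j, (ν i * x i k) * (ν j * x j k)
            * (inner ℝ (x i) (x j) : ℝ) ^ m := by
      have e1 : ∀ i j : Fin n, ν i * ν j * (inner ℝ (x i) (x j) : ℝ) ^ (m+1)
          = ∑ k, (ν i * x i k) * (ν j * x j k) * (inner ℝ (x i) (x j) : ℝ) ^ m := by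
        intro i j
        rw [pow_succ, hin i j, Finset.mul_sum, Finset.mul_sum]
        refine Finset.sum_congr rfl fun k _ => ?_
        ring
      calc ∑ i, ∑ j, ν i * ν j * (inner ℝ (x i) (x j) : ℝ) ^ (m+1)
          = ∑ i, ∑ k, ∑ j, (ν i * x i k) * (ν j * x j k)
              * (inner ℝ (x i) (x j) : ℝ) ^ m := by
            refine Finset.sum_congr rfl fun i _ => ?_
            rw [Finset.sum_congr rfl fun j (_ : j ∈ Finset.univ) => e1 i j]
            exact Finset.sum_comm
        _ = ∑ k, ∑ i, ∑ j, (ν i * x i k) * (ν j * x j k)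
              * (inner ℝ (x i) (x j) : ℝ) ^ m := Finset.sum_comm

    rw [key]
    exact Finset.sum_nonneg fun k _ => ih (fun i => ν i * x i k)

lemma real_exp_tsum (z : ℝ) : Real.exp z = ∑' m : ℕ, z ^ m / m.factorial := by
  rw [Real.exp_eq_exp_ℝ, NormedSpace.exp_eq_tsum_div]

lemma quad_tsum_nonneg {n : ℕ} (f : Fin n → Fin n → ℕ → ℝ)
    (hs : ∀ i j, Summable (f i j)) (h : ∀ m, 0 ≤ ∑ i, ∑ j, f i j m) :
    0 ≤ ∑ i, ∑ j, ∑' m, f i j m := by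
  have e : ∑ i, ∑ j, ∑' m, f i j m
      = ∑ p ∈ Finset.univ ×ˢ (Finset.univ : Finset (Fin n)), ∑' m, f p.1 p.2 m := by
    rw [Finset.sum_product]
  rw [e, ← Summable.tsum_finsetSum (fun p _ => hs p.1 p.2)]
  refine tsum_nonneg fun m => ?_
  rw [Finset.sum_product]
  exact h m

lemma gaussian_quad {d n : ℕ} (x : Fin n → EuclideanSpace ℝ (Fin d)) {t : ℝ} (ht : 0 ≤ t)
    (μ : Fin n → ℝ) :
    0 ≤ ∑ i, ∑ j, μ i * μ j * Real.exp (-(t * ‖x i - x j‖ ^ 2)) := by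
  set ν : Fin n → ℝ := fun i => μ i * Real.exp (-(t * ‖x i‖ ^ 2)) with hν
  have key : ∀ i j, μ i * μ j * Real.exp (-(t * ‖x i - x j‖ ^ 2))
      = ν i * ν j * Real.exp (2 * t * (inner ℝ (x i) (x j) : ℝ)) := by
    intro i j
    have hns : ‖x i - x j‖ ^ 2 = ‖x i‖ ^ 2 - 2 * (inner ℝ (x i) (x j) : ℝ) + ‖x j‖ ^ 2 :=
      norm_sub_sq_real (x i) (x j)
    have : -(t * ‖x i - x j‖ ^ 2)
        = -(t * ‖x i‖ ^ 2) + -(t * ‖x j‖ ^ 2) + 2 * t * (inner ℝ (x i) (x j) : ℝ) := by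
      rw [hns]; ring
    rw [this, Real.exp_add, Real.exp_add, hν]
    ring
  have key2 : ∀ i j, ν i * ν j * Real.exp (2 * t * (inner ℝ (x i) (x j) : ℝ))
      = ∑' m : ℕ, ν i * ν j * ((2 * t * (inner ℝ (x i) (x j) : ℝ)) ^ m / m.factorial) := by
    intro i j
    rw [real_exp_tsum, ← tsum_mul_left]
  calc 0 ≤ ∑ i, ∑ j, ∑' m : ℕ, ν i * ν j
            * ((2 * t * (inner ℝ (x i) (x j) : ℝ)) ^ m / m.factorial) := by
        refine quad_tsum_nonneg _ (fun i j => ?_) (fun m => ?_)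
        · exact (Real.summable_pow_div_factorial _).mul_left _
        · have e : ∀ i j : Fin n, ν i * ν j * ((2 * t * (inner ℝ (x i) (x j) : ℝ)) ^ m / m.factorial)
              = ((2*t) ^ m / m.factorial) * ((ν i * ν j) * (inner ℝ (x i) (x j) : ℝ) ^ m) := by
            intro i j
            rw [mul_pow]
            ring
          simp only [e, ← Finset.mul_sum]
          refine mul_nonneg (div_nonneg (pow_nonneg (by linarith) m) (Nat.cast_nonneg _)) ?_
          exact inner_pow_quad x m ν
    _ = ∑ i, ∑ j, μ i * μ j * Real.exp (-(t * ‖x i - x j‖ ^ 2)) := by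
        refine Finset.sum_congr rfl fun i _ => Finset.sum_congr rfl fun j _ => ?_
        rw [key i j, key2 i j]

section Mixt

lemma mix_ind {n : ℕ} (lam : Fin n → ℝ) (D : Fin n → Fin n → ℝ)
    {a b : ℝ} (ha : 0 < a) (hab : a ≤ b) (w : ℝ → ℝ)
    (HG : ∀ t : ℝ, 0 ≤ t → 0 ≤ ∑ i, ∑ j, lam i * lam j * Real.exp (-(t * D i j)))
    (hw0 : ∀ s ∈ Icc a b, 0 ≤ w s) (hwc : ContinuousOn w (Icc a b)) :
    ∀ (m : ℕ) (t : ℝ), 0 ≤ t →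
      0 ≤ ∑ i, ∑ j, lam i * lam j
            * (∫ s in a..b, w s * Real.exp (-(s * D i j))) ^ m
            * Real.exp (-(t * D i j)) := by
  have huIcc : uIcc a b = Icc a b := uIcc_of_le hab
  have hInt : ∀ (K c : ℝ) (i j : Fin n), IntervalIntegrable
      (fun s => w s * (K * Real.exp (-((c + s) * D i j)))) volume a b := by
    intro K c i j
    apply ContinuousOn.intervalIntegrable
    rw [huIcc]
    exact hwc.mul (Continuous.continuousOn (by continuity))
  intro m
  induction m with
  | zero =>
    intro t ht
    simpa using HG t ht
  | succ m ih =>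
    intro t ht
    have e1 : ∀ i j : Fin n, lam i * lam j
          * (∫ s in a..b, w s * Real.exp (-(s * D i j))) ^ (m+1) * Real.exp (-(t * D i j))
        = ∫ s in a..b, w s * ((lam i * lam j
            * (∫ u in a..b, w u * Real.exp (-(u * D i j))) ^ m)
            * Real.exp (-((t + s) * D i j))) := by
      intro i j
      rw [pow_succ]
      have e0 : ∀ s : ℝ, w s * ((lam i * lam j
            * (∫ u in a..b, w u * Real.exp (-(u * D i j))) ^ m)
            * Real.exp (-((t + s) * D i j)))
          = (lam i * lam j * (∫ u in a..b, w u * Real.exp (-(u * D i j))) ^ m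
              * Real.exp (-(t * D i j))) * (w s * Real.exp (-(s * D i j))) := by
        intro s
        rw [show -((t + s) * D i j) = -(t * D i j) + -(s * D i j) by ring, Real.exp_add]
        ring
      simp only [e0]
      rw [intervalIntegral.integral_const_mul]
      ring
    simp only [e1]
    have hInt2 : ∀ i j : Fin n, IntervalIntegrable (fun s => w s * ((lam i * lam j
            * (∫ u in a..b, w u * Real.exp (-(u * D i j))) ^ m)
            * Real.exp (-((t + s) * D i j)))) volume a b := fun i j => hInt _ t i j
    have swap : ∑ i, ∑ j, (∫ s in a..b, w s * ((lam i * lam j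
            * (∫ u in a..b, w u * Real.exp (-(u * D i j))) ^ m)
            * Real.exp (-((t + s) * D i j))))
        = ∫ s in a..b, ∑ i, ∑ j, w s * ((lam i * lam j
            * (∫ u in a..b, w u * Real.exp (-(u * D i j))) ^ m)
            * Real.exp (-((t + s) * D i j))) := by
      have st1 : ∑ i, ∑ j, (∫ s in a..b, w s * ((lam i * lam j
            * (∫ u in a..b, w u * Real.exp (-(u * D i j))) ^ m)
            * Real.exp (-((t + s) * D i j))))
          = ∑ i, ∫ s in a..b, ∑ j, w s * ((lam i * lam j
            * (∫ u in a..b, w u * Real.exp (-(u * D i j))) ^ m)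
            * Real.exp (-((t + s) * D i j))) :=
        Finset.sum_congr rfl fun i _ =>
          (intervalIntegral.integral_finset_sum (fun j _ => hInt2 i j)).symm
      rw [st1]
      refine (intervalIntegral.integral_finset_sum (fun i _ => ?_)).symm
      apply ContinuousOn.intervalIntegrable
      rw [huIcc]
      refine continuousOn_finset_sum _ fun j _ => ?_
      exact hwc.mul (Continuous.continuousOn (by continuity))
    rw [swap]
    apply intervalIntegral.integral_nonneg hab
    intro s hs
    have hs0 : 0 ≤ s := le_trans ha.le hs.1
    have e2 : ∑ i, ∑ j, w s * ((lam i * lam j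
          * (∫ u in a..b, w u * Real.exp (-(u * D i j))) ^ m)
          * Real.exp (-((t + s) * D i j)))
        = w s * ∑ i, ∑ j, lam i * lam j
          * (∫ u in a..b, w u * Real.exp (-(u * D i j))) ^ m
          * Real.exp (-((t + s) * D i j)) := by
      simp only [← Finset.mul_sum, mul_assoc]
    rw [e2]
    exact mul_nonneg (hw0 s hs) (ih (t + s) (by linarith))

lemma mix_exp {n : ℕ} (lam : Fin n → ℝ) (D : Fin n → Fin n → ℝ)
    {a b : ℝ} (ha : 0 < a) (hab : a ≤ b) (w : ℝ → ℝ)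
    (HG : ∀ t : ℝ, 0 ≤ t → 0 ≤ ∑ i, ∑ j, lam i * lam j * Real.exp (-(t * D i j)))
    (hw0 : ∀ s ∈ Icc a b, 0 ≤ w s) (hwc : ContinuousOn w (Icc a b)) :
    0 ≤ ∑ i, ∑ j, lam i * lam j
        * Real.exp (-(∫ s in a..b, w s * (1 - Real.exp (-(s * D i j))))) := by
  have huIcc : uIcc a b = Icc a b := uIcc_of_le hab
  set H : Fin n → Fin n → ℝ := fun i j => ∫ s in a..b, w s * Real.exp (-(s * D i j)) with hH
  set M : ℝ := ∫ s in a..b, w s with hM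
  have hwint : IntervalIntegrable w volume a b :=
    ContinuousOn.intervalIntegrable (by rw [huIcc]; exact hwc)
  have hwe : ∀ i j : Fin n, IntervalIntegrable
      (fun s => w s * Real.exp (-(s * D i j))) volume a b := by
    intro i j
    apply ContinuousOn.intervalIntegrable
    rw [huIcc]
    exact hwc.mul (Continuous.continuousOn (by continuity))
  have hsplit : ∀ i j : Fin n,
      (∫ s in a..b, w s * (1 - Real.exp (-(s * D i j)))) = M - H i j := by
    intro i j
    have : (fun s => w s * (1 - Real.exp (-(s * D i j))))
        = fun s => w s - w s * Real.exp (-(s * D i j)) := by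
      funext s; ring
    rw [this, intervalIntegral.integral_sub hwint (hwe i j)]
  have hterm : ∀ i j : Fin n, lam i * lam j * Real.exp (-(∫ s in a..b,
        w s * (1 - Real.exp (-(s * D i j)))))
      = ∑' m : ℕ, lam i * lam j * Real.exp (-M) * (H i j ^ m / m.factorial) := by
    intro i j
    rw [hsplit i j, show -(M - H i j) = -M + H i j by ring, Real.exp_add,
      real_exp_tsum (H i j), ← tsum_mul_left, ← tsum_mul_left]
    exact tsum_congr fun m => by ring
  simp only [hterm]
  refine quad_tsum_nonneg _ (fun i j => (Real.summable_pow_div_factorial _).mul_left _)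
    (fun m => ?_)
  have e : ∀ i j : Fin n, lam i * lam j * Real.exp (-M) * (H i j ^ m / m.factorial)
      = (Real.exp (-M) / m.factorial) * (lam i * lam j * H i j ^ m * Real.exp (-(0 * D i j))) := by
    intro i j
    rw [zero_mul, neg_zero, Real.exp_zero]
    ring
  simp only [e, ← Finset.mul_sum]
  refine mul_nonneg (div_nonneg (Real.exp_nonneg _) (Nat.cast_nonneg _)) ?_
  exact mix_ind lam D ha hab w HG hw0 hwc m 0 le_rfl

end Mixt

noncomputable def Cb (β : ℝ) : ℝ := ∫ s in Ioi (0:ℝ), (1 - Real.exp (-(s*1))) * s ^ (-1-β)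

lemma kernel_contOn {β u : ℝ} :
    ContinuousOn (fun s : ℝ => (1 - Real.exp (-(s*u))) * s ^ (-1-β)) {s : ℝ | s ≠ 0} := by
  refine ContinuousOn.mul (Continuous.continuousOn (by continuity)) ?_
  exact fun s hs => (Real.continuousAt_rpow_const s _ (Or.inl hs)).continuousWithinAt

lemma integrable_kernel {β u : ℝ} (hβ0 : 0 < β) (hβ1 : β < 1) (hu : 0 < u) :
    IntegrableOn (fun s : ℝ => (1 - Real.exp (-(s*u))) * s ^ (-1-β)) (Ioi 0) := by
  have hmeas : ∀ (S : Set ℝ), MeasurableSet S → S ⊆ {s : ℝ | s ≠ 0} →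
      AEStronglyMeasurable (fun s : ℝ => (1 - Real.exp (-(s*u))) * s ^ (-1-β))
        (volume.restrict S) := by
    intro S hS hsub
    exact ContinuousOn.aestronglyMeasurable (kernel_contOn.mono hsub) hS
  have h1 : IntegrableOn (fun s : ℝ => (1 - Real.exp (-(s*u))) * s ^ (-1-β)) (Ioc 0 1) := by
    have hg0 : IntegrableOn (fun s : ℝ => s ^ (-β)) (Ioc 0 1) := by
      rw [← intervalIntegrable_iff_integrableOn_Ioc_of_le zero_le_one]
      exact intervalIntegral.intervalIntegrable_rpow' (by linarith)
    have hg : IntegrableOn (fun s : ℝ => u * s ^ (-β)) (Ioc 0 1) := hg0.const_mul u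
    refine Integrable.mono' hg (hmeas _ measurableSet_Ioc (fun s hs => ne_of_gt hs.1)) ?_
    filter_upwards [ae_restrict_mem measurableSet_Ioc] with s hs
    have hs0 : 0 < s := hs.1
    have h0 : 0 ≤ 1 - Real.exp (-(s*u)) := by
      have := Real.exp_le_one_iff.mpr (by nlinarith : -(s*u) ≤ 0)
      linarith
    have h1' : 1 - Real.exp (-(s*u)) ≤ s * u := by
      have := Real.add_one_le_exp (-(s*u))
      linarith
    rw [Real.norm_eq_abs, abs_of_nonneg (mul_nonneg h0 (Real.rpow_nonneg hs0.le _))]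
    calc (1 - Real.exp (-(s*u))) * s ^ (-1-β) ≤ (s * u) * s ^ (-1-β) := by
          refine mul_le_mul_of_nonneg_right h1' (Real.rpow_nonneg hs0.le _)
      _ = u * s ^ (-β) := by
          rw [show s * u * s ^ (-1-β) = u * (s ^ (1:ℝ) * s ^ (-1-β)) by
            rw [Real.rpow_one]; ring, ← Real.rpow_add hs0,
            show (1:ℝ) + (-1-β) = -β by ring]
  have h2 : IntegrableOn (fun s : ℝ => (1 - Real.exp (-(s*u))) * s ^ (-1-β)) (Ioi 1) := by
    have hg : IntegrableOn (fun s : ℝ => s ^ (-1-β)) (Ioi 1) :=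
      integrableOn_Ioi_rpow_of_lt (by linarith) zero_lt_one
    refine Integrable.mono' hg (hmeas _ measurableSet_Ioi
      (fun s hs => ne_of_gt (lt_trans zero_lt_one hs))) ?_
    filter_upwards [ae_restrict_mem measurableSet_Ioi] with s hs
    have hs0 : 0 < s := lt_trans zero_lt_one hs
    have h0 : 0 ≤ 1 - Real.exp (-(s*u)) := by
      have := Real.exp_le_one_iff.mpr (by nlinarith : -(s*u) ≤ 0)
      linarith
    have h1' : 1 - Real.exp (-(s*u)) ≤ 1 := by
      have := Real.exp_pos (-(s*u))
      linarith
    rw [Real.norm_eq_abs, abs_of_nonneg (mul_nonneg h0 (Real.rpow_nonneg hs0.le _))]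
    calc (1 - Real.exp (-(s*u))) * s ^ (-1-β) ≤ 1 * s ^ (-1-β) :=
          mul_le_mul_of_nonneg_right h1' (Real.rpow_nonneg hs0.le _)
      _ = s ^ (-1-β) := one_mul _
  have := h1.union h2
  rwa [Ioc_union_Ioi_eq_Ioi zero_le_one] at this

lemma kernel_scaling {β u : ℝ} (hβ0 : 0 < β) (hβ1 : β < 1) (hu : 0 < u) :
    ∫ s in Ioi (0:ℝ), (1 - Real.exp (-(s*u))) * s ^ (-1-β) = u ^ β * Cb β := by
  have hcomp : (∫ x in Ioi (0:ℝ), (fun s => (1 - Real.exp (-(s*1))) * s ^ (-1-β)) (u * x))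
      = u⁻¹ • ∫ x in Ioi (u*0), (1 - Real.exp (-(x*1))) * x ^ (-1-β) :=
    integral_comp_mul_left_Ioi (fun s => (1 - Real.exp (-(s*1))) * s ^ (-1-β)) 0 hu
  rw [mul_zero] at hcomp
  have hlhs : ∫ s in Ioi (0:ℝ), (1 - Real.exp (-(s*u))) * s ^ (-1-β)
      = u ^ (1+β) * ∫ x in Ioi (0:ℝ), (fun s => (1 - Real.exp (-(s*1))) * s ^ (-1-β)) (u * x) := by
    rw [← integral_const_mul]
    refine setIntegral_congr_fun measurableSet_Ioi (fun s hs => ?_)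
    have hs0 : 0 < s := hs
    simp only
    rw [Real.mul_rpow hu.le hs0.le, mul_one]
    rw [show -(u*s) = -(s*u) by ring]
    rw [show u ^ (1+β) * ((1 - Real.exp (-(s*u))) * (u ^ (-1-β) * s ^ (-1-β)))
        = (u ^ (1+β) * u ^ (-1-β)) * ((1 - Real.exp (-(s*u))) * s ^ (-1-β)) by ring,
      ← Real.rpow_add hu, show (1+β) + (-1-β) = (0:ℝ) by ring, Real.rpow_zero, one_mul]
  rw [hlhs, hcomp, smul_eq_mul, ← mul_assoc, ← Cb]
  congr 1
  rw [show u ^ (1+β) * u⁻¹ = u ^ (1+β) * u ^ (-1:ℝ) by rw [Real.rpow_neg_one],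
    ← Real.rpow_add hu]
  norm_num

lemma Cb_pos {β : ℝ} (hβ0 : 0 < β) (hβ1 : β < 1) : 0 < Cb β := by
  have hint : IntegrableOn (fun s : ℝ => (1 - Real.exp (-(s*1))) * s ^ (-1-β)) (Ioi 0) :=
    integrable_kernel hβ0 hβ1 one_pos
  have hnn : 0 ≤ᵐ[volume.restrict (Ioi (0:ℝ))]
      fun s : ℝ => (1 - Real.exp (-(s*1))) * s ^ (-1-β) := by
    filter_upwards [ae_restrict_mem measurableSet_Ioi] with s hs
    have hs0 : 0 < s := hs
    have h0 : 0 ≤ 1 - Real.exp (-(s*1)) := by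
      have := Real.exp_le_one_iff.mpr (by nlinarith : -(s*1) ≤ 0)
      linarith
    exact mul_nonneg h0 (Real.rpow_nonneg hs0.le _)
  have hle : ∫ s in Ioc (1:ℝ) 2, (1 - Real.exp (-(s*1))) * s ^ (-1-β) ≤ Cb β := by
    refine setIntegral_mono_set hint hnn ?_
    exact HasSubset.Subset.eventuallyLE (fun s hs => lt_trans zero_lt_one hs.1)
  have hlow : (1 - Real.exp (-1)) * 2 ^ (-1-β)
      ≤ ∫ s in Ioc (1:ℝ) 2, (1 - Real.exp (-(s*1))) * s ^ (-1-β) := by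
    have hconst : ∫ _ in Ioc (1:ℝ) 2, ((1 - Real.exp (-1)) * 2 ^ (-1-β) : ℝ)
        = (1 - Real.exp (-1)) * 2 ^ (-1-β) := by
      rw [setIntegral_const]
      rw [Real.volume_real_Ioc]
      norm_num
    rw [← hconst]
    refine setIntegral_mono_on
      (integrableOn_const (by rw [Real.volume_Ioc]; norm_num))
      (hint.mono_set (fun s hs => lt_trans zero_lt_one hs.1)) measurableSet_Ioc ?_
    · intro s hs
      have hs1 : 1 ≤ s := hs.1.le
      have hs0 : 0 < s := lt_of_lt_of_le one_pos hs1
      refine mul_le_mul ?_ ?_ (Real.rpow_nonneg (by norm_num) _) ?_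
      · have : Real.exp (-(s*1)) ≤ Real.exp (-1) := by
          apply Real.exp_le_exp.mpr; nlinarith
        linarith
      · exact Real.rpow_le_rpow_of_nonpos hs0 (by linarith [hs.2]) (by linarith)
      · have h0 : Real.exp (-(s*1)) ≤ 1 := Real.exp_le_one_iff.mpr (by nlinarith)
        have := Real.rpow_nonneg hs0.le (-1-β)
        linarith
  have hc : 0 < (1 - Real.exp (-1)) * 2 ^ (-1-β) := by
    have h1 : Real.exp (-1) < 1 := Real.exp_lt_one_iff.mpr (by norm_num)
    have h2 : (0:ℝ) < 2 ^ (-1-β) := Real.rpow_pos_of_pos (by norm_num) _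
    nlinarith
  linarith

lemma iUnion_Ioc_eq : (⋃ m : ℕ, Ioc (1/(m+1) : ℝ) (m+1)) = Ioi (0:ℝ) := by
  ext x
  simp only [mem_iUnion, mem_Ioc, mem_Ioi]
  constructor
  · rintro ⟨m, h1, _⟩
    exact lt_trans (by positivity) h1
  · intro hx
    obtain ⟨m₁, hm₁⟩ := exists_nat_gt x
    obtain ⟨m₂, hm₂⟩ := exists_nat_gt (1/x)
    refine ⟨m₁ + m₂, ?_, ?_⟩
    · rw [div_lt_iff₀ (by positivity)]
      have h3 : 1 < (m₂:ℝ) * x := (div_lt_iff₀ hx).mp hm₂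
      have h4 : (0:ℝ) ≤ (m₁:ℝ) := Nat.cast_nonneg m₁
      push_cast
      nlinarith
    · push_cast
      push_cast at hm₁
      linarith

lemma tendsto_trunc {β : ℝ} (hβ0 : 0 < β) (hβ1 : β < 1) {u : ℝ} (hu : 0 ≤ u) :
    Tendsto (fun m : ℕ => ∫ s in Ioc (1/(m+1) : ℝ) (m+1),
        (Cb β)⁻¹ * ((1 - Real.exp (-(s*u))) * s ^ (-1-β))) atTop (𝓝 (u ^ β)) := by
  rcases eq_or_lt_of_le hu with h0 | hpos
  · have : ∀ m : ℕ, (∫ s in Ioc (1/(m+1) : ℝ) (m+1),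
        (Cb β)⁻¹ * ((1 - Real.exp (-(s*u))) * s ^ (-1-β))) = 0 := by
      intro m
      rw [← h0]
      simp
    have h2 : u ^ β = (0:ℝ) := by rw [← h0, Real.zero_rpow (ne_of_gt hβ0)]
    simp only [this, h2]
    exact tendsto_const_nhds
  · have hint : IntegrableOn (fun s : ℝ => (Cb β)⁻¹ * ((1 - Real.exp (-(s*u))) * s ^ (-1-β)))
        (Ioi 0) := (integrable_kernel hβ0 hβ1 hpos).const_mul _
    have hmono : Monotone (fun m : ℕ => Ioc (1/(m+1) : ℝ) (m+1)) := by
      intro m₁ m₂ hm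
      have hc : (m₁:ℝ) ≤ (m₂:ℝ) := Nat.cast_le.mpr hm
      exact Ioc_subset_Ioc (one_div_le_one_div_of_le (by positivity) (by linarith)) (by linarith)
    have key := tendsto_setIntegral_of_monotone (fun m : ℕ => measurableSet_Ioc) hmono
      (by rw [iUnion_Ioc_eq]; exact hint)
    rw [iUnion_Ioc_eq] at key
    have hval : ∫ s in Ioi (0:ℝ), (Cb β)⁻¹ * ((1 - Real.exp (-(s*u))) * s ^ (-1-β))
        = u ^ β := by
      rw [integral_const_mul, kernel_scaling hβ0 hβ1 hpos,
        show (Cb β)⁻¹ * (u ^ β * Cb β) = (Cb β)⁻¹ * Cb β * u ^ β by ring,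
        inv_mul_cancel₀ (ne_of_gt (Cb_pos hβ0 hβ1)), one_mul]
    rwa [hval] at key

lemma forward {d : ℕ} (hd : 1 ≤ d) {α : ℝ} (hα : 0 < α)
    (H : IsPosDefFun (fun x : EuclideanSpace ℝ (Fin d) => Real.exp (-‖x‖ ^ α))) : α ≤ 2 := by
  by_contra hgt
  push_neg at hgt
  set c : ℝ := (2:ℝ) ^ α with hcdef
  have hc : 4 < c := by
    have h1 : (2:ℝ) ^ (2:ℝ) < (2:ℝ) ^ α := Real.rpow_lt_rpow_of_exponent_lt one_lt_two hgt
    have h2 : (2:ℝ) ^ (2:ℝ) = 4 := by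
      rw [show (2:ℝ) = ((2:ℕ):ℝ) by norm_num]
      rw [Real.rpow_natCast]
      norm_num
    linarith
  have key : ∀ s : ℝ, 0 < s → 1 - Real.exp (-(c*s)) ≤ 4 * (1 - Real.exp (-s)) := by
    intro s hs
    set t : ℝ := s ^ (1/α) with htdef
    have ht : 0 < t := Real.rpow_pos_of_pos hs _
    have hts : t ^ α = s := by
      rw [htdef, ← Real.rpow_mul hs.le, one_div, inv_mul_cancel₀ (ne_of_gt hα), Real.rpow_one]
    have h2t : ((2*t) : ℝ) ^ α = c * s := by
      rw [Real.mul_rpow (by norm_num) ht.le, hts]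
    let e : Fin d := ⟨0, hd⟩
    set pts : Fin 3 → EuclideanSpace ℝ (Fin d) :=
      fun i => EuclideanSpace.single e (((i:ℕ):ℝ) * t) with hpts
    have hsub : ∀ i j : Fin 3, pts i - pts j
        = EuclideanSpace.single e ((((i:ℕ):ℝ) - ((j:ℕ):ℝ)) * t) := by
      intro i j
      rw [hpts]
      ext k
      rw [PiLp.sub_apply]
      by_cases h : k = e <;> simp [EuclideanSpace.single_apply, h, sub_mul]
    have hnorm : ∀ i j : Fin 3, ‖pts i - pts j‖ = |((i:ℕ):ℝ) - ((j:ℕ):ℝ)| * t := by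
      intro i j
      rw [hsub i j, EuclideanSpace.norm_single, Real.norm_eq_abs, abs_mul, abs_of_pos ht]
    have hq := H 3 pts ![1, -2, 1]
    have hval : ∀ i j : Fin 3, Real.exp (-‖pts i - pts j‖ ^ α)
        = Real.exp (-((|((i:ℕ):ℝ) - ((j:ℕ):ℝ)| * t) ^ α)) := by
      intro i j; rw [hnorm i j]
    simp only [hval] at hq
    rw [Fin.sum_univ_three] at hq
    rw [Fin.sum_univ_three, Fin.sum_univ_three, Fin.sum_univ_three] at hq
    norm_num at hq
    rw [Real.zero_rpow (ne_of_gt hα), hts, h2t] at hq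
    rw [neg_zero, Real.exp_zero] at hq
    -- hq should now give: 0 ≤ 6 - 8 exp(-s) + 2 exp(-(c*s))
    norm_num [Matrix.cons_val_two, Matrix.tail_cons, Matrix.head_cons] at hq
    linarith
  -- now derive the contradiction
  set s : ℝ := (c - 4)/(8*c) with hsdef
  have hs : 0 < s := by
    rw [hsdef]
    have : (0:ℝ) < 8 * c := by linarith
    exact div_pos (by linarith) this
  have hcs : 0 < c * s := mul_pos (by linarith) hs
  have h1 : 1 - Real.exp (-s) ≤ s := by
    have := Real.add_one_le_exp (-s)
    linarith
  have hexp : 1 + c*s ≤ Real.exp (c*s) := by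
    have := Real.add_one_le_exp (c*s)
    linarith
  have h2 : (c*s)/(1+c*s) ≤ 1 - Real.exp (-(c*s)) := by
    have hinv : Real.exp (-(c*s)) ≤ (1+c*s)⁻¹ := by
      rw [Real.exp_neg]
      exact inv_anti₀ (by linarith) hexp
    have heq : (c*s)/(1+c*s) = 1 - (1+c*s)⁻¹ := by
      field_simp
      ring
    rw [heq]
    linarith
  have hkey := key s hs
  have hfinal : (c*s)/(1+c*s) ≤ 4*s := by linarith
  have hmul : c*s ≤ 4*s*(1+c*s) := by
    rw [div_le_iff₀ (by linarith : (0:ℝ) < 1 + c*s)] at hfinal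
    linarith
  have hseq : s * (8*c) = c - 4 := by
    rw [hsdef]
    field_simp
  nlinarith [hs, hc, hmul, hseq, mul_pos hs hcs]

lemma backward {d : ℕ} {α : ℝ} (hα : 0 < α) (hα2 : α ≤ 2) :
    IsPosDefFun (fun x : EuclideanSpace ℝ (Fin d) => Real.exp (-‖x‖ ^ α)) := by
  intro n x lam
  simp only
  rcases eq_or_lt_of_le hα2 with heq | hlt
  · have hterm : ∀ i j : Fin n, Real.exp (-‖x i - x j‖ ^ α)
        = Real.exp (-((1:ℝ) * ‖x i - x j‖ ^ 2)) := by
      intro i j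
      rw [heq, one_mul, show (2:ℝ) = ((2:ℕ):ℝ) by norm_num, Real.rpow_natCast]
    simp only [hterm]
    exact gaussian_quad x zero_le_one lam
  · set β : ℝ := α / 2 with hβ
    have hβ0 : 0 < β := by positivity
    have hβ1 : β < 1 := by rw [hβ]; linarith
    have hpow : ∀ y : EuclideanSpace ℝ (Fin d), ‖y‖ ^ α = (‖y‖ ^ 2) ^ β := by
      intro y
      rw [show (‖y‖ ^ 2 : ℝ) = ‖y‖ ^ ((2:ℕ):ℝ) from (Real.rpow_natCast _ 2).symm,
        ← Real.rpow_mul (norm_nonneg y)]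
      norm_num [hβ]
      rw [show ((2:ℝ)) * (α/2) = α by ring]
    set D : Fin n → Fin n → ℝ := fun i j => ‖x i - x j‖ ^ 2 with hD
    have HG : ∀ t : ℝ, 0 ≤ t → 0 ≤ ∑ i, ∑ j, lam i * lam j * Real.exp (-(t * D i j)) :=
      fun t ht => gaussian_quad x ht lam
    set w : ℝ → ℝ := fun s => (Cb β)⁻¹ * s ^ (-1-β) with hw
    have hCb := Cb_pos hβ0 hβ1
    have hterm : ∀ m : ℕ, 0 ≤ ∑ i, ∑ j, lam i * lam j *
        Real.exp (-(∫ s in Ioc (1/(m+1) : ℝ) (m+1),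
          (Cb β)⁻¹ * ((1 - Real.exp (-(s * D i j))) * s ^ (-1-β)))) := by
      intro m
      have ha : (0:ℝ) < 1/(m+1) := by positivity
      have hab : (1/(m+1) : ℝ) ≤ (m+1) := by
        rw [div_le_iff₀ (by positivity)]
        have : (0:ℝ) ≤ (m:ℝ) := Nat.cast_nonneg m
        nlinarith
      have hiv : ∀ i j : Fin n, (∫ s in Ioc (1/(m+1) : ℝ) (m+1),
            (Cb β)⁻¹ * ((1 - Real.exp (-(s * D i j))) * s ^ (-1-β)))
          = ∫ s in (1/(m+1) : ℝ)..(m+1), w s * (1 - Real.exp (-(s * D i j))) := by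
        intro i j
        rw [intervalIntegral.integral_of_le hab]
        refine setIntegral_congr_fun measurableSet_Ioc fun s _ => ?_
        rw [hw]; ring
      simp only [hiv]
      refine mix_exp lam D ha hab w HG (fun s hs => ?_) ?_
      · have h1 : (0:ℝ) < s := lt_of_lt_of_le ha hs.1
        have := hCb.le
        positivity
      · refine continuousOn_const.mul (fun s hs => ?_)
        exact (Real.continuousAt_rpow_const s _
          (Or.inl (ne_of_gt (lt_of_lt_of_le ha hs.1)))).continuousWithinAt
    have hlim : Tendsto (fun m : ℕ => ∑ i, ∑ j, lam i * lam j *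
        Real.exp (-(∫ s in Ioc (1/(m+1) : ℝ) (m+1),
          (Cb β)⁻¹ * ((1 - Real.exp (-(s * D i j))) * s ^ (-1-β)))))
        atTop (𝓝 (∑ i, ∑ j, lam i * lam j * Real.exp (-(D i j ^ β)))) := by
      refine tendsto_finset_sum _ fun i _ => tendsto_finset_sum _ fun j _ => ?_
      have h1 := tendsto_trunc hβ0 hβ1 (u := D i j) (by rw [hD]; positivity)
      exact Tendsto.const_mul _ ((Real.continuous_exp.tendsto _).comp h1.neg)
    have final : 0 ≤ ∑ i, ∑ j, lam i * lam j * Real.exp (-(D i j ^ β)) :=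
      ge_of_tendsto' hlim hterm
    have goal_eq : ∀ i j : Fin n, Real.exp (-‖x i - x j‖ ^ α) = Real.exp (-(D i j ^ β)) := by
      intro i j
      rw [hpow (x i - x j)]
    simp only [goal_eq]
    exact final

/-- (Schoenberg.) For `d ≥ 1` and `α > 0`, the stable function `K(x) = exp(−‖x‖^α)`
on `ℝ^d` with the Euclidean norm is positive definite if and only if `α ≤ 2`. -/
theorem stable_posDef_iff (d : ℕ) (hd : 1 ≤ d) (α : ℝ) (hα : 0 < α) :
    IsPosDefFun (fun x : EuclideanSpace ℝ (Fin d) => Real.exp (-‖x‖ ^ α)) ↔ α ≤ 2 :=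
  ⟨fun H => forward hd hα H, fun h2 => backward hα h2⟩
end

section
/- The triangle function applied to the Euclidean norm in two dimensions, K : ℝ² → ℝ defined by K(x) = max(1 − ‖x‖, 0), is not a positive definite function on ℝ². -/
set_option maxRecDepth 100000
set_option maxHeartbeats 4000000

/- Counterexample: 64 points on an 8×8 grid with spacing 1/2, with integer weights. -/

private def wl : List ℤ := [1, -7, 2, -10, 2, -9, 1, -4, 7, -2, 17, -3, 20, -3, 13, -1,
  2, -17, 4, -26, 4, -23, 3, -9, 10, -3, 26, -5, 30, -4, 20, -2,
  2, -20, 4, -30, 5, -26, 3, -10, 9, -3, 23, -4, 26, -4, 17, -2,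
  1, -13, 3, -20, 3, -17, 2, -7, 4, -1, 9, -2, 10, -2, 7, -1]

private def lamZ (i : Fin 64) : ℤ := wl.getD i.val 0

private def px (i : Fin 64) : ℤ := (i.val / 8 : ℕ)
private def py (i : Fin 64) : ℤ := (i.val % 8 : ℕ)

private def sqd (i j : Fin 64) : ℤ := (px i - px j) ^ 2 + (py i - py j) ^ 2

private def g2 (s : ℤ) : ℤ := if s = 0 then 2 else if s = 1 then 1 else if s = 2 then 2 else 0
private def h2 (s : ℤ) : ℤ := if s = 2 then -1 else 0

private noncomputable def X (i : Fin 64) : EuclideanSpace ℝ (Fin 2) :=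
  WithLp.toLp 2 ![(px i : ℝ) / 2, (py i : ℝ) / 2]

private lemma sq_ne_three (a b : ℤ) : a ^ 2 + b ^ 2 ≠ 3 := by
  intro h
  have ha1 : a ≤ 1 := by nlinarith [sq_nonneg b]
  have ha2 : -1 ≤ a := by nlinarith [sq_nonneg b]
  have hb1 : b ≤ 1 := by nlinarith [sq_nonneg a]
  have hb2 : -1 ≤ b := by nlinarith [sq_nonneg a]
  interval_cases a <;> interval_cases b <;> omega

private lemma norm_X (i j : Fin 64) :
    ‖X i - X j‖ = Real.sqrt ((sqd i j : ℝ)) / 2 := by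
  have h0 : ‖X i - X j‖ =
      Real.sqrt ((((px i : ℝ) - px j) / 2) ^ 2 + (((py i : ℝ) - py j) / 2) ^ 2) := by
    rw [EuclideanSpace.norm_eq]
    congr 1
    rw [Fin.sum_univ_two]
    simp [X, Real.norm_eq_abs, sq_abs]
    ring
  have h2 : ((sqd i j : ℤ) : ℝ) = ((px i : ℝ) - px j) ^ 2 + ((py i : ℝ) - py j) ^ 2 := by
    simp only [sqd]; push_cast; ring
  have h1 : (((px i : ℝ) - px j) / 2) ^ 2 + (((py i : ℝ) - py j) / 2) ^ 2
      = ((sqd i j : ℤ) : ℝ) / 4 := by rw [h2]; ring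
  have hnn : (0:ℝ) ≤ ((sqd i j : ℤ) : ℝ) := by rw [h2]; positivity
  rw [h0, h1, Real.sqrt_div hnn]
  rw [show (4:ℝ) = 2 ^ 2 by norm_num, Real.sqrt_sq (by norm_num : (0:ℝ) ≤ 2)]

private lemma key_eval (i j : Fin 64) :
    max (1 - ‖X i - X j‖) 0
      = (g2 (sqd i j) : ℝ) / 2 + (h2 (sqd i j) : ℝ) * (Real.sqrt 2 / 2) := by
  rw [norm_X]
  have hs0 : 0 ≤ sqd i j := by rw [sqd]; positivity
  have hs3 : sqd i j ≠ 3 := sq_ne_three _ _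
  set s := sqd i j with hs
  clear_value s
  rcases lt_or_ge s 4 with h4 | h4
  · interval_cases s
    · norm_num [g2, h2]
    · rw [show ((1:ℤ):ℝ) = 1 by norm_num, Real.sqrt_one]
      norm_num [g2, h2]
    · have e1 : ((2:ℤ):ℝ) = 2 := by norm_num
      have e2 : g2 2 = 2 := by decide
      have e3 : h2 2 = -1 := by decide
      have e4 : (0:ℝ) ≤ 1 - Real.sqrt 2 / 2 := by
        nlinarith [Real.sq_sqrt (by norm_num : (0:ℝ) ≤ 2), Real.sqrt_nonneg 2]
      rw [e1, e2, e3, max_eq_left e4]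
      push_cast; ring
    · exact (hs3 rfl).elim
  · have hle : (2:ℝ) ≤ Real.sqrt (s : ℝ) := by
      rw [show (2:ℝ) = Real.sqrt 4 by
        rw [show (4:ℝ) = 2 ^ 2 by norm_num, Real.sqrt_sq (by norm_num : (0:ℝ) ≤ 2)]]
      exact Real.sqrt_le_sqrt (by exact_mod_cast h4)
    rw [max_eq_right (by linarith)]
    have hg0 : g2 s = 0 := by unfold g2; split_ifs <;> omega
    have hh0 : h2 s = 0 := by unfold h2; split_ifs <;> omega
    rw [hg0, hh0]
    norm_num

/-- The triangle function applied to the Euclidean norm in two dimensions,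
`K(x) = max(1 − ‖x‖, 0)`, is not positive definite on `ℝ²`. -/
theorem triangle_not_posDef_on_plane :
    ¬ IsPosDefFun (fun x : EuclideanSpace ℝ (Fin 2) => max (1 - ‖x‖) 0) := by
  intro h
  have H := h 64 X (fun i => (lamZ i : ℝ))
  simp only at H
  have key : ∀ i j : Fin 64,
      (lamZ i : ℝ) * (lamZ j : ℝ) * max (1 - ‖X i - X j‖) 0
        = ((lamZ i * lamZ j * g2 (sqd i j) : ℤ) : ℝ) / 2
          + ((lamZ i * lamZ j * h2 (sqd i j) : ℤ) : ℝ) * (Real.sqrt 2 / 2) := by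
    intro i j
    rw [key_eval i j]
    push_cast
    ring
  have hg : (∑ i : Fin 64, ∑ j : Fin 64, lamZ i * lamZ j * g2 (sqd i j)) = -49948 := by decide
  have hh : (∑ i : Fin 64, ∑ j : Fin 64, lamZ i * lamZ j * h2 (sqd i j)) = 34846 := by decide
  have hsum : ∑ i : Fin 64, ∑ j : Fin 64,
      (lamZ i : ℝ) * (lamZ j : ℝ) * max (1 - ‖X i - X j‖) 0
      = (-49948 : ℝ) / 2 + (34846 : ℝ) * (Real.sqrt 2 / 2) := by
    simp_rw [key, Finset.sum_add_distrib, ← Finset.sum_div, ← Finset.sum_mul,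
      ← Int.cast_sum]
    rw [hg, hh]
    norm_num
  rw [hsum] at H
  have hlt : Real.sqrt 2 < 1.415 := by
    nlinarith [Real.sq_sqrt (by norm_num : (0:ℝ) ≤ 2), Real.sqrt_nonneg 2]
  nlinarith
end

section
/- There exist parameters α_G > 0 and α_E > 0 such that the BRC kernel on S² × ℝ given by K((p, e), (q, e')) = exp(−(α_G · θ(p, q) + α_E · |e − e'|)^{1.01}), where θ(p, q) = arccos⟨p, q⟩ is the geodesic distance on the unit sphere S² ⊂ ℝ³, is not a positive definite kernel; that is, there exist points p₁, …, pₙ ∈ S², real values e₁, …, eₙ and real weights λ₁, …, λₙ with ∑_{i,j} λᵢ λⱼ K((pᵢ, eᵢ), (pⱼ, eⱼ)) < 0. -/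
/-- A positively-oriented coordinate point on the unit sphere in `ℝ³`. -/
noncomputable def sphPt (k : Fin 3) : Metric.sphere (0 : EuclideanSpace ℝ (Fin 3)) 1 :=
  ⟨EuclideanSpace.single k 1, by simp [EuclideanSpace.norm_single]⟩

/-- A negatively-oriented coordinate point on the unit sphere in `ℝ³`. -/
noncomputable def sphPt' (k : Fin 3) : Metric.sphere (0 : EuclideanSpace ℝ (Fin 3)) 1 :=
  ⟨-EuclideanSpace.single k 1, by simp [EuclideanSpace.norm_single]⟩

lemma vec6_four {α : Type*} (a b c d e f : α) : ![a,b,c,d,e,f] 4 = e := rfl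
lemma vec6_five {α : Type*} (a b c d e f : α) : ![a,b,c,d,e,f] 5 = f := rfl

/-- The key analytic inequality: for a suitably small `αG > 0`,
`1 + exp(-(αG·π)^{1.01}) < 2·exp(-(αG·π/2)^{1.01})`, which is possible precisely because
the exponent `1.01` exceeds `1` (so that `2^{1.01} > 2`). -/
lemma brc_key_ineq : ∃ αG : ℝ, 0 < αG ∧
    1 + Real.exp (-(αG * Real.pi) ^ (1.01:ℝ)) <
      2 * Real.exp (-(αG * (Real.pi/2)) ^ (1.01:ℝ)) := by
  have hπ : (0:ℝ) < Real.pi := Real.pi_pos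
  refine ⟨(2/Real.pi) * (1/1000 : ℝ) ^ ((100:ℝ)/101), by positivity, ?_⟩
  set u : ℝ := (1/1000 : ℝ) ^ ((100:ℝ)/101) with hu
  have hu0 : 0 < u := by positivity
  have h1 : (2/Real.pi) * u * (Real.pi/2) = u := by field_simp
  have h2 : (2/Real.pi) * u * Real.pi = 2 * u := by field_simp
  have h3 : u ^ (1.01:ℝ) = 1/1000 := by
    rw [hu, ← Real.rpow_mul (by norm_num : (0:ℝ) ≤ 1/1000)]
    norm_num
  rw [h1, h2]
  have h4 : (2 * u) ^ (1.01:ℝ) = (2:ℝ) ^ (1.01:ℝ) * (1/1000) := by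
    rw [Real.mul_rpow (by norm_num) hu0.le, h3]
  rw [h3, h4]
  set c : ℝ := (2:ℝ) ^ (1.01:ℝ) with hcdef
  have hc : 2.0138628 ≤ c := by
    have hsplit : c = 2 * (2:ℝ) ^ (0.01:ℝ) := by
      rw [hcdef, show (1.01:ℝ) = 1 + 0.01 by norm_num, Real.rpow_add two_pos,
        Real.rpow_one]
    rw [hsplit]
    have h5 : (2:ℝ) ^ (0.01:ℝ) = Real.exp (0.01 * Real.log 2) := by
      rw [Real.rpow_def_of_pos two_pos]; ring_nf
    have hlog : (0.6931471803:ℝ) < Real.log 2 := Real.log_two_gt_d9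
    have h6 : 1 + 0.01 * Real.log 2 ≤ Real.exp (0.01 * Real.log 2) := by
      have := Real.add_one_le_exp (0.01 * Real.log 2); linarith
    rw [h5]; nlinarith
  have hB : Real.exp (-(c * (1/1000))) < (1 + 2.0138628/1000)⁻¹ := by
    have h7 : Real.exp (-(c * (1/1000))) ≤ Real.exp (-(2.0138628/1000)) :=
      Real.exp_le_exp.mpr (by linarith)
    have h8 : Real.exp (-(2.0138628/1000 : ℝ)) < (1 + 2.0138628/1000)⁻¹ := by
      rw [Real.exp_neg]
      have h9 : (1:ℝ) + 2.0138628/1000 < Real.exp (2.0138628/1000) := by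
        have := Real.add_one_lt_exp (x := (2.0138628/1000 : ℝ)) (by norm_num)
        linarith
      exact inv_strictAnti₀ (by positivity) h9
    linarith
  have hA : (1:ℝ) - 1/1000 < Real.exp (-(1/1000)) := by
    have := Real.add_one_lt_exp (x := (-(1/1000) : ℝ)) (by norm_num)
    linarith
  have hnum : (1:ℝ) + (1 + 2.0138628/1000)⁻¹ < 2 * (1 - 1/1000) := by norm_num
  linarith

/-- There exist `α_G > 0`, `α_E > 0` such that the BRC kernel
`K((p, e), (q, e')) = exp(−(α_G · arccos⟨p, q⟩ + α_E · |e − e'|)^{1.01})` on `S² × ℝ`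
(`S²` being the unit sphere in `ℝ³` with the geodesic distance `arccos⟨p, q⟩`) is not
positive definite: there are points `pᵢ ∈ S²`, values `eᵢ ∈ ℝ` and weights `λᵢ` with
`∑ᵢ ∑ⱼ λᵢ λⱼ K((pᵢ, eᵢ), (pⱼ, eⱼ)) < 0`. -/
theorem brc_sphere_exponent_above_one_not_posDef :
    ∃ (αG αE : ℝ), 0 < αG ∧ 0 < αE ∧
      ∃ (n : ℕ) (p : Fin n → Metric.sphere (0 : EuclideanSpace ℝ (Fin 3)) 1)
        (e : Fin n → ℝ) (lam : Fin n → ℝ),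
        ∑ i, ∑ j, lam i * lam j *
          Real.exp (-(αG * Real.arccos (inner ℝ (p i : EuclideanSpace ℝ (Fin 3))
              (p j : EuclideanSpace ℝ (Fin 3)) : ℝ) +
            αE * |e i - e j|) ^ (1.01 : ℝ)) < 0 := by
  obtain ⟨αG, hαG, h⟩ := brc_key_ineq
  refine ⟨αG, 1, hαG, one_pos, 6,
    ![sphPt 0, sphPt' 0, sphPt 1, sphPt' 1, sphPt 2, sphPt' 2],
    fun _ => 0, ![1,1,1,1,-2,-2], ?_⟩
  simp only [Fin.sum_univ_six]
  simp only [Matrix.cons_val_zero, Matrix.cons_val_one, Matrix.head_cons,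
    Matrix.cons_val_two, Matrix.tail_cons, Matrix.cons_val_three, Matrix.cons_val_four,
    vec6_four, vec6_five, sphPt, sphPt']
  simp only [sub_zero, sub_self, abs_zero, mul_zero, add_zero, one_mul,
    inner_neg_neg, inner_neg_left, inner_neg_right,
    EuclideanSpace.inner_single_left, EuclideanSpace.single_apply, map_one]
  norm_num [Real.arccos_one, Real.arccos_neg_one, Real.arccos_zero,
    Real.zero_rpow, Real.exp_zero, show ((0:Fin 3) = 2) = False by simp,
    show ((1:Fin 3) = 2) = False by simp, show ((2:Fin 3) = 0) = False by simp,
    show ((2:Fin 3) = 1) = False by simp]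
  norm_num at h
  set A := Real.exp (-(αG * (Real.pi/2)) ^ ((101:ℝ)/100)) with hA
  set B := Real.exp (-(αG * Real.pi) ^ ((101:ℝ)/100)) with hB
  linarith
end
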